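/- arXiv:1302.1729 — 7 statements merged into one kernel-verified Lean document; each statement's English description precedes it below -/
import Mathlib

section
/- Given an adjunction F ⊣ R : 𝒜 → ℬ and a comonad G on 𝒜, the two constructions κ ↦ (Gσ) ∘ (κR) and t ↦ (tF) ∘ (Fη) are mutually inverse bijections between left G-comodule structures on F and comonad morphisms FR ⟶ G. -/
open CategoryTheory

/-- For an adjunction `F ⊣ R : 𝒜 → ℬ` (with `F : ℬ ⥤ 𝒜` the left adjoint,
unit `η` and counit `σ`) and a comonad `G` on `𝒜`, the two constructions
`κ ↦ (Gσ) ∘ (κR)` and `t ↦ (tF) ∘ (Fη)` are mutually inverse bijections between left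
`G`-comodule structures on `F` and comonad morphisms `FR ⟶ G`. -/
theorem statement2 {A : Type*} {B : Type*} [Category A] [Category B]
    (F : B ⥤ A) (R : A ⥤ B) (adj : F ⊣ R) (G : Comonad A) :
    -- (a) `κ ↦ (Gσ) ∘ (κR)` sends comodule structures to comonad morphisms:
    (∀ κ : F ⟶ F ⋙ (G : A ⥤ A),
      (∀ X : B, κ.app X ≫ G.ε.app (F.obj X) = 𝟙 (F.obj X)) →
      (∀ X : B, κ.app X ≫ G.δ.app (F.obj X) = κ.app X ≫ (G : A ⥤ A).map (κ.app X)) →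
      ∃ t : adj.toComonad ⟶ G,
        ∀ X : A, t.app X = κ.app (R.obj X) ≫ (G : A ⥤ A).map (adj.counit.app X)) ∧
    -- (b) `t ↦ (tF) ∘ (Fη)` sends comonad morphisms to comodule structures:
    (∀ t : adj.toComonad ⟶ G,
      (∀ X : B,
        (F.map (adj.unit.app X) ≫ t.app (F.obj X)) ≫ G.ε.app (F.obj X) = 𝟙 (F.obj X)) ∧
      (∀ X : B,
        (F.map (adj.unit.app X) ≫ t.app (F.obj X)) ≫ G.δ.app (F.obj X) =
          (F.map (adj.unit.app X) ≫ t.app (F.obj X)) ≫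
            (G : A ⥤ A).map (F.map (adj.unit.app X) ≫ t.app (F.obj X)))) ∧
    -- (c) starting from a comodule structure `κ`, the round trip returns `κ`:
    (∀ κ : F ⟶ F ⋙ (G : A ⥤ A),
      (∀ X : B, κ.app X ≫ G.ε.app (F.obj X) = 𝟙 (F.obj X)) →
      (∀ X : B, κ.app X ≫ G.δ.app (F.obj X) = κ.app X ≫ (G : A ⥤ A).map (κ.app X)) →
      ∀ X : B,
        F.map (adj.unit.app X) ≫
          (κ.app (R.obj (F.obj X)) ≫ (G : A ⥤ A).map (adj.counit.app (F.obj X))) =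
        κ.app X) ∧
    -- (d) starting from a comonad morphism `t`, the round trip returns `t`:
    (∀ t : adj.toComonad ⟶ G, ∀ X : A,
      F.map (adj.unit.app (R.obj X)) ≫ t.app (F.obj (R.obj X)) ≫
        (G : A ⥤ A).map (adj.counit.app X) = t.app X) := by
  unfold Adjunction.toComonad
  refine ⟨?_, ?_, ?_, ?_⟩
  · -- (a)
    intro κ hε hδ
    refine ⟨⟨⟨fun X => κ.app (R.obj X) ≫ (G : A ⥤ A).map (adj.counit.app X), ?_⟩, ?_, ?_⟩,
      fun X => rfl⟩
    · intro X Y f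
      have h := κ.naturality (R.map f)
      dsimp at h ⊢
      rw [← Category.assoc, h, Category.assoc, ← Functor.map_comp,
        Adjunction.counit_naturality, Functor.map_comp, Category.assoc]
    · intro X
      dsimp
      rw [Category.assoc, G.ε.naturality, ← Category.assoc, hε]
      simp
    · intro X
      have h1 := κ.naturality (adj.unit.app (R.obj X))
      have h2 := G.δ.naturality (adj.counit.app X)
      dsimp at h1 h2 ⊢
      rw [Category.assoc, h2, ← Category.assoc, hδ]
      simp only [Category.assoc]
      rw [reassoc_of% h1]
      simp only [Category.assoc, ← Functor.map_comp, adj.left_triangle_components]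
      simp [Functor.map_comp]
  · -- (b)
    intro t
    constructor
    · intro X
      rw [Category.assoc, t.app_ε]
      exact adj.left_triangle_components X
    · intro X
      rw [Category.assoc, t.app_δ]
      have h2 : t.app (F.obj X) ≫ (G : A ⥤ A).map (F.map (adj.unit.app X)) =
          F.map (R.map (F.map (adj.unit.app X))) ≫ t.app (F.obj (R.obj (F.obj X))) :=
        (t.toNatTrans.naturality (F.map (adj.unit.app X))).symm
      have h3 : adj.unit.app X ≫ R.map (F.map (adj.unit.app X)) =
          adj.unit.app X ≫ adj.unit.app (R.obj (F.obj X)) :=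
        (adj.unit.naturality (adj.unit.app X)).symm
      simp only [Functor.map_comp, Category.assoc]
      rw [← Category.assoc (t.app _), h2]
      simp only [Adjunction.toComonad_δ]
      dsimp
      rw [← Category.assoc (F.map _), ← Functor.map_comp, ← h3, Functor.map_comp]
      simp
  · -- (c)
    intro κ hε hδ X
    have h := κ.naturality (adj.unit.app X)
    dsimp at h
    rw [← Category.assoc, h, Category.assoc, ← Functor.map_comp,
      adj.left_triangle_components]
    simp
  · -- (d)
    intro t X
    have h4 : t.app (F.obj (R.obj X)) ≫ (G : A ⥤ A).map (adj.counit.app X) =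
        F.map (R.map (adj.counit.app X)) ≫ t.app X :=
      (t.toNatTrans.naturality (adj.counit.app X)).symm
    rw [h4, ← Category.assoc, ← Functor.map_comp, adj.right_triangle_components]
    simp
end

section
/- Let T be a monad on a category 𝒜 whose unit e : 1 ⟶ T is a split monomorphism of functors (i.e. there is e' : T ⟶ 1 with e' ∘ e = 1). If 𝒜 is Cauchy complete (idempotents split), then every pair of parallel morphisms in 𝒜 whose image under the free functor φ_T : 𝒜 → 𝒜_T admits a split equalizer, itself admits a split equalizer in 𝒜, and this equalizer is preserved by φ_T. -/
open CategoryTheory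

/-- Let `T` be a monad on a category `𝒜` whose unit `e : 1 ⟶ T` is a split
monomorphism of functors (there is `e' : T ⟶ 1` with `e' ∘ e = 1`). If `𝒜` is Cauchy
complete, then every parallel pair in `𝒜` whose image under the free functor
`φ_T : 𝒜 → 𝒜_T` admits a split equalizer itself admits a split equalizer in `𝒜`, and
this equalizer is preserved by `φ_T` (its image is again a split equalizer). -/
theorem statement4 {A : Type*} [Category A] (T : Monad A)
    (e' : (T : A ⥤ A) ⟶ 𝟭 A) (he : T.η ≫ e' = 𝟙 (𝟭 A))
    [IsIdempotentComplete A]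
    {X Y : A} (f g : X ⟶ Y)
    (hsplit : ∃ (E' : T.Algebra) (ι' : E' ⟶ T.free.obj X),
      Nonempty (CategoryTheory.IsSplitEqualizer (T.free.map f) (T.free.map g) ι')) :
    ∃ (E : A) (ι : E ⟶ X),
      Nonempty (CategoryTheory.IsSplitEqualizer f g ι) ∧
      Nonempty (CategoryTheory.IsSplitEqualizer (T.free.map f) (T.free.map g) (T.free.map ι)) := by
  obtain ⟨E', ι', ⟨se⟩⟩ := hsplit
  -- underlying morphisms in A
  set i : E'.A ⟶ T.obj X := ι'.f with hi
  set r : T.obj X ⟶ E'.A := se.leftRetraction.f with hr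
  set t : T.obj Y ⟶ T.obj X := se.rightRetraction.f with ht
  have hcond : i ≫ T.map f = i ≫ T.map g := congrArg Monad.Algebra.Hom.f se.condition
  have hir : i ≫ r = 𝟙 E'.A := congrArg Monad.Algebra.Hom.f se.ι_leftRetraction
  have hgt : T.map g ≫ t = 𝟙 (T.obj X) := congrArg Monad.Algebra.Hom.f se.bottom_rightRetraction
  have hft : T.map f ≫ t = r ≫ i := congrArg Monad.Algebra.Hom.f se.top_rightRetraction
  -- the unit is split componentwise
  have he_appX : T.η.app X ≫ e'.app X = 𝟙 X := congr_app he X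
  have he_appY : T.η.app Y ≫ e'.app Y = 𝟙 Y := congr_app he Y
  -- naturality facts
  have hηf : f ≫ T.η.app Y = T.η.app X ≫ T.map f := T.η.naturality f
  have hηg : g ≫ T.η.app Y = T.η.app X ≫ T.map g := T.η.naturality g
  have he'f : T.map f ≫ e'.app Y = e'.app X ≫ f := e'.naturality f
  have he'g : T.map g ≫ e'.app Y = e'.app X ≫ g := e'.naturality g
  -- the idempotent q on T X, and p on X
  set q : T.obj X ⟶ T.obj X := r ≫ i with hq
  have hqfg : q ≫ T.map f = q ≫ T.map g := by
    rw [hq, Category.assoc, hcond, Category.assoc]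
  -- any morphism equalizing T f and T g is fixed by q
  have hfix : ∀ {Z : A} (h : Z ⟶ T.obj X), h ≫ T.map f = h ≫ T.map g → h ≫ q = h := by
    intro Z h hh
    have : h ≫ T.map f ≫ t = h ≫ T.map g ≫ t := by
      rw [← Category.assoc, hh, Category.assoc]
    rw [hft, hgt] at this
    simpa [hq] using this
  set p : X ⟶ X := T.η.app X ≫ q ≫ e'.app X with hp
  have hstar : (q ≫ e'.app X ≫ T.η.app X) ≫ q = q ≫ e'.app X ≫ T.η.app X := by
    apply hfix
    calc (q ≫ e'.app X ≫ T.η.app X) ≫ T.map f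
        = q ≫ e'.app X ≫ (f ≫ T.η.app Y) := by rw [hηf]; simp
      _ = q ≫ (e'.app X ≫ f) ≫ T.η.app Y := by simp
      _ = q ≫ (T.map f ≫ e'.app Y) ≫ T.η.app Y := by rw [he'f]
      _ = (q ≫ T.map f) ≫ e'.app Y ≫ T.η.app Y := by simp
      _ = (q ≫ T.map g) ≫ e'.app Y ≫ T.η.app Y := by rw [hqfg]
      _ = q ≫ (T.map g ≫ e'.app Y) ≫ T.η.app Y := by simp
      _ = q ≫ (e'.app X ≫ g) ≫ T.η.app Y := by rw [he'g]
      _ = q ≫ e'.app X ≫ (g ≫ T.η.app Y) := by simp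
      _ = (q ≫ e'.app X ≫ T.η.app X) ≫ T.map g := by rw [hηg]; simp
  have hpp : p ≫ p = p := by
    calc p ≫ p = T.η.app X ≫ ((q ≫ e'.app X ≫ T.η.app X) ≫ q) ≫ e'.app X := by
          simp [hp]
      _ = T.η.app X ≫ (q ≫ e'.app X ≫ T.η.app X) ≫ e'.app X := by rw [hstar]
      _ = T.η.app X ≫ q ≫ e'.app X ≫ (T.η.app X ≫ e'.app X) := by simp
      _ = p := by rw [he_appX]; simp [hp]
  obtain ⟨W, ι, ρ, hιρ, hρι⟩ := IsIdempotentComplete.idempotents_split X p hpp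
  -- the backwards map on the Y side
  set d : Y ⟶ X := T.η.app Y ≫ t ≫ e'.app X with hd
  have hgd : g ≫ d = 𝟙 X := by
    calc g ≫ d = (g ≫ T.η.app Y) ≫ t ≫ e'.app X := by simp [hd]
      _ = T.η.app X ≫ (T.map g ≫ t) ≫ e'.app X := by rw [hηg]; simp
      _ = 𝟙 X := by rw [hgt]; simpa using he_appX
  have hfd : f ≫ d = p := by
    calc f ≫ d = (f ≫ T.η.app Y) ≫ t ≫ e'.app X := by simp [hd]
      _ = T.η.app X ≫ (T.map f ≫ t) ≫ e'.app X := by rw [hηf]; simp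
      _ = p := by rw [hft, hp, hq]
  have hι : ι ≫ p = ι := by
    rw [← hρι, ← Category.assoc, hιρ, Category.id_comp]
  have hιfg : ι ≫ f = ι ≫ g := by
    calc ι ≫ f = ι ≫ p ≫ f := by rw [← Category.assoc, hι]
      _ = ι ≫ T.η.app X ≫ (q ≫ T.map f) ≫ e'.app Y := by
          rw [hp]; simp [he'f]
      _ = ι ≫ T.η.app X ≫ (q ≫ T.map g) ≫ e'.app Y := by rw [hqfg]
      _ = ι ≫ p ≫ g := by rw [hp]; simp [he'g]
      _ = ι ≫ g := by rw [← Category.assoc, hι]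
  have se₀ : IsSplitEqualizer f g ι :=
    { leftRetraction := ρ
      rightRetraction := d
      condition := hιfg
      ι_leftRetraction := hιρ
      bottom_rightRetraction := hgd
      top_rightRetraction := by rw [hfd, hρι] }
  exact ⟨W, ι, ⟨se₀⟩, ⟨se₀.map T.free⟩⟩
end

section
/- Let 𝒜 be a Cauchy complete category and L ⊣ R : 𝒜 → ℬ an adjunction whose unit ν : 1 ⟶ RL is a split monomorphism. Then for any functor F : 𝒜 → 𝔼 and K : 𝔼 → ℬ with KF naturally isomorphic to R, the functor F is conservative. -/
open CategoryTheory

/-- Let `𝒜` be a Cauchy complete category and `L ⊣ R : 𝒜 → ℬ` an adjunction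
whose unit `ν : 1 ⟶ RL` is a split monomorphism.  Then for any functor `F : 𝒜 → 𝔼` and
`K : 𝔼 → ℬ` with `KF` naturally isomorphic to `R`, the functor `F` is conservative.

Here `R : 𝒜 ⥤ ℬ` and `L : ℬ ⥤ 𝒜`, and the adjunction relating them has unit
`ν : 𝟭 𝒜 ⟶ R ⋙ L` living on `𝒜` (as in the source, where `RL` denotes the composite
"first `R`, then `L`" and the Cauchy completeness of `𝒜` is what is used); split means
there is `ν' : R ⋙ L ⟶ 𝟭 𝒜` with `ν' ∘ ν = 1`. -/
theorem statement5 {A : Type*} {B : Type*} {E : Type*}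
    [Category A] [Category B] [Category E]
    [IsIdempotentComplete A]
    (R : A ⥤ B) (L : B ⥤ A) (adj : R ⊣ L)
    (ν' : R ⋙ L ⟶ 𝟭 A) (hν : adj.unit ≫ ν' = 𝟙 (𝟭 A))
    (F : A ⥤ E) (K : E ⥤ B) (iso : F ⋙ K ≅ R) :
    F.ReflectsIsomorphisms := by
  constructor
  intro X Y f hf
  have h1 : IsIso (K.map (F.map f)) := inferInstance
  have hR : IsIso (R.map f) := by
    have h2 : R.map f = iso.inv.app X ≫ K.map (F.map f) ≫ iso.hom.app Y := by
      have := iso.hom.naturality f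
      dsimp at this
      rw [this]; simp
    rw [h2]; infer_instance
  have hRL : IsIso ((R ⋙ L).map f) := by
    dsimp [Functor.comp]; infer_instance
  have hXX : adj.unit.app X ≫ ν'.app X = 𝟙 X := congrArg (fun t => t.app X) hν
  have hYY : adj.unit.app Y ≫ ν'.app Y = 𝟙 Y := congrArg (fun t => t.app Y) hν
  have hnu : f ≫ adj.unit.app Y = adj.unit.app X ≫ (R ⋙ L).map f := by
    have := adj.unit.naturality f; dsimp at this ⊢; rw [← this]
  have hnu' : ν'.app X ≫ f = (R ⋙ L).map f ≫ ν'.app Y := by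
    have := ν'.naturality f; dsimp at this ⊢; rw [this]
  refine ⟨⟨adj.unit.app Y ≫ inv ((R ⋙ L).map f) ≫ ν'.app X, ?_, ?_⟩⟩
  · rw [← Category.assoc, hnu, Category.assoc, IsIso.hom_inv_id_assoc, hXX]
  · simp only [Category.assoc, hnu', IsIso.inv_hom_id_assoc, hYY]
end

section
/- Let 𝒜 be a Cauchy complete category and L ⊣ R : 𝒜 → ℬ an adjunction whose unit is a split monomorphism. Then R is a comonadic functor. -/
open CategoryTheory

/-- Let `𝒜` be a Cauchy complete category and `L ⊣ R : 𝒜 → ℬ` an adjunction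
whose unit is a split monomorphism.  Then `R` is a comonadic functor: the canonical
comparison functor from `𝒜` to the Eilenberg–Moore category of coalgebras over the
comonad `LR` on `ℬ` generated by the adjunction is an equivalence.

Here `R : 𝒜 ⥤ ℬ`, `L : ℬ ⥤ 𝒜`, the adjunction has unit `ν : 𝟭 𝒜 ⟶ R ⋙ L` (on `𝒜`,
matching the hypothesis that `𝒜` is Cauchy complete), the generated comonad on `ℬ` has
underlying functor `L ⋙ R` (i.e. `LR`), and the comparison functor is
`Comonad.comparison adj : 𝒜 ⥤ adj.toComonad.Coalgebra`. -/
theorem statement6 {A : Type*} {B : Type*} [Category A] [Category B]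
    [IsIdempotentComplete A]
    (R : A ⥤ B) (L : B ⥤ A) (adj : R ⊣ L)
    (ν' : R ⋙ L ⟶ 𝟭 A) (hν : adj.unit ≫ ν' = 𝟙 (𝟭 A)) :
    (Comonad.comparison adj).IsEquivalence := by
  have hνapp : ∀ X : A, adj.unit.app X ≫ ν'.app X = 𝟙 X := fun X => congr_fun (congrArg NatTrans.app hν) X
  -- any morphism is recovered from its image under R
  have key : ∀ {X Y : A} (f : X ⟶ Y),
      adj.unit.app X ≫ L.map (R.map f) ≫ ν'.app Y = f := by
    intro X Y f
    have h1 := adj.unit.naturality f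
    dsimp at h1
    rw [← Category.assoc, ← h1, Category.assoc, hνapp, Category.comp_id]
  haveI hFaithful : (Comonad.comparison adj).Faithful := by
    constructor
    intro X Y f g w
    have hf : R.map f = R.map g := congrArg Comonad.Coalgebra.Hom.f w
    rw [← key f, ← key g, hf]
  haveI hFull : (Comonad.comparison adj).Full := by
    constructor
    intro X Y g
    refine ⟨adj.unit.app X ≫ L.map g.f ≫ ν'.app Y, ?_⟩
    ext
    have hg := g.h
    dsimp [Adjunction.toComonad] at hg ⊢
    show R.map (adj.unit.app X ≫ L.map g.f ≫ ν'.app Y) = g.f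
    erw [R.map_comp, R.map_comp]
    -- R.map (adj.unit.app X) ≫ R.map (L.map g.f) = g.f ≫ R.map (adj.unit.app Y)
    erw [← Category.assoc, hg, Category.assoc, ← R.map_comp, hνapp, R.map_id,
      Category.comp_id]
  haveI hEssSurj : (Comonad.comparison adj).EssSurj := by
    constructor
    intro Y
    set p : L.obj Y.A ⟶ L.obj Y.A := L.map Y.a ≫ ν'.app (L.obj Y.A) with hp
    have hcounit : Y.a ≫ adj.counit.app Y.A = 𝟙 Y.A := Y.counit
    have hcoassoc : Y.a ≫ R.map (adj.unit.app (L.obj Y.A)) = Y.a ≫ R.map (L.map Y.a) := by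
      have := Y.coassoc
      dsimp [Adjunction.toComonad] at this
      exact this
    have nat1 : ν'.app (L.obj Y.A) ≫ L.map Y.a
        = L.map (R.map (L.map Y.a)) ≫ ν'.app (L.obj (R.obj (L.obj Y.A))) := by
      have := ν'.naturality (L.map Y.a)
      dsimp at this
      erw [this]
    have nat2 : L.map (R.map (adj.unit.app (L.obj Y.A))) ≫ ν'.app (L.obj (R.obj (L.obj Y.A)))
        = ν'.app (L.obj Y.A) ≫ adj.unit.app (L.obj Y.A) := by
      have := ν'.naturality (adj.unit.app (L.obj Y.A))
      dsimp at this
      rw [this]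
    have hcoassocL : L.map Y.a ≫ L.map (R.map (L.map Y.a))
        = L.map Y.a ≫ L.map (R.map (adj.unit.app (L.obj Y.A))) := by
      erw [← L.map_comp, ← L.map_comp, ← hcoassoc]; rfl
    have hidem : p ≫ p = p := by
      simp only [hp, Category.assoc]
      erw [Category.assoc, reassoc_of% nat1, Category.assoc, reassoc_of% hcoassocL, Category.assoc, reassoc_of% nat2, hνapp, Category.comp_id]
    obtain ⟨X, i, e, hie, hei⟩ := IsIdempotentComplete.idempotents_split (L.obj Y.A) p hidem
    have hip : i ≫ p = i := by rw [← hei, ← Category.assoc, hie, Category.id_comp]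
    have hpe : p ≫ e = e := by rw [← hei, Category.assoc, hie, Category.comp_id]
    have haRp : Y.a ≫ R.map p = Y.a := by
      simp only [hp, Functor.map_comp]
      erw [R.map_comp, ← Category.assoc, ← hcoassoc, Category.assoc, ← R.map_comp, hνapp, R.map_id]
      exact Category.comp_id _
    have hpLa : p ≫ L.map Y.a = p ≫ adj.unit.app (L.obj Y.A) := by
      simp only [hp, Category.assoc]
      erw [Category.assoc, Category.assoc, nat1, reassoc_of% hcoassocL, Category.assoc, nat2]; rfl
    have hkey : R.map p ≫ adj.counit.app Y.A ≫ Y.a = R.map p := by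
      have hεnat : adj.counit.app Y.A ≫ Y.a
          = R.map (L.map Y.a) ≫ adj.counit.app (R.obj (L.obj Y.A)) := by
        have := adj.counit.naturality Y.a
        dsimp at this
        erw [this]
      have hRpLa : R.map p ≫ R.map (L.map Y.a)
          = R.map p ≫ R.map (adj.unit.app (L.obj Y.A)) := by
        erw [← R.map_comp, ← R.map_comp, hpLa]; rfl
      erw [hεnat, reassoc_of% hRpLa, Category.assoc, adj.left_triangle_components, Category.comp_id]
    have hφψ : (Y.a ≫ R.map e) ≫ (R.map i ≫ adj.counit.app Y.A) = 𝟙 Y.A := by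
      have h1 : (Y.a ≫ R.map e) ≫ (R.map i ≫ adj.counit.app Y.A)
          = Y.a ≫ R.map p ≫ adj.counit.app Y.A := by
        rw [← hei]
        simp only [Functor.map_comp, Category.assoc]
        exact (Category.assoc _ _ _).trans (congrArg _ (Category.assoc _ _ _).symm)
      erw [h1, ← Category.assoc, haRp, hcounit]
    have hψφ : (R.map i ≫ adj.counit.app Y.A) ≫ (Y.a ≫ R.map e) = 𝟙 (R.obj X) := by
      simp only [Category.assoc]
      rw [← hip]
      simp only [Functor.map_comp, Category.assoc]
      erw [reassoc_of% hkey, ← Functor.map_comp, hpe, ← Functor.map_comp, hie, R.map_id]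
    have hηnat : e ≫ adj.unit.app X = adj.unit.app (L.obj Y.A) ≫ L.map (R.map e) := by
      have := adj.unit.naturality e
      dsimp at this
      rw [← this]
    have hw : Y.a ≫ (adj.toComonad : B ⥤ B).map (Y.a ≫ R.map e)
        = (Y.a ≫ R.map e) ≫ ((Comonad.comparison adj).obj X).a := by
      show Y.a ≫ R.map (L.map (Y.a ≫ R.map e)) = (Y.a ≫ R.map e) ≫ R.map (adj.unit.app X)
      erw [L.map_comp, R.map_comp, Category.assoc, ← Category.assoc Y.a (R.map (L.map Y.a)), ← hcoassoc, Category.assoc, ← R.map_comp, ← hηnat, R.map_comp]; rfl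

    exact ⟨X, ⟨(Comonad.Coalgebra.isoMk (⟨Y.a ≫ R.map e, R.map i ≫ adj.counit.app Y.A,
      hφψ, hψφ⟩ : Y.A ≅ ((Comonad.comparison adj).obj X).A) hw).symm⟩⟩
  exact {}
end

section
/- Let (𝒟, ∘, I, ∗, J, ζ) be a duoidal category and (A, m, e, δ, ε) a bimonoid in 𝒟. Then the natural transformation λ_X : (X ∗ A) ∘ A → (X ∘ A) ∗ A given by the composite ((X ∘ A) ∗ m) ∘ ζ_{X,A,A,A} ∘ ((X ∗ A) ∘ δ) is a mixed distributive law from the monad − ∘ A to the comonad − ∗ A on 𝒟. -/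
open CategoryTheory

universe v u

/-- A duoidal category: a category `D` with two monoidal structures `(∘, I)` (`mon₁`)
and `(∗, J)` (`mon₂`), an interchange law
`ζ : (W ∗ X) ∘ (Y ∗ Z) ⟶ (W ∘ Y) ∗ (X ∘ Z)`, and structure morphisms
`Δ : I → I ∗ I`, `μ : J ∘ J → J`, `τ : I → J` satisfying associativity, unitality and
compatibility of the units. -/
structure Duoidal (D : Type u) [Category.{v} D] where
  /-- the first monoidal structure `(∘, I)` -/
  mon₁ : MonoidalCategory D
  /-- the second monoidal structure `(∗, J)` -/
  mon₂ : MonoidalCategory D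
  /-- the interchange law -/
  ζ : ∀ W X Y Z : D,
    mon₁.tensorObj (mon₂.tensorObj W X) (mon₂.tensorObj Y Z) ⟶
      mon₂.tensorObj (mon₁.tensorObj W Y) (mon₁.tensorObj X Z)
  ζ_natural : ∀ {W W' X X' Y Y' Z Z' : D}
    (f₁ : W ⟶ W') (f₂ : X ⟶ X') (f₃ : Y ⟶ Y') (f₄ : Z ⟶ Z'),
    mon₁.tensorHom (mon₂.tensorHom f₁ f₂) (mon₂.tensorHom f₃ f₄) ≫ ζ W' X' Y' Z' =
      ζ W X Y Z ≫ mon₂.tensorHom (mon₁.tensorHom f₁ f₃) (mon₁.tensorHom f₂ f₄)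
  /-- `Δ : I → I ∗ I` -/
  ΔI : mon₁.tensorUnit ⟶ mon₂.tensorObj mon₁.tensorUnit mon₁.tensorUnit
  /-- `μ : J ∘ J → J` -/
  μJ : mon₁.tensorObj mon₂.tensorUnit mon₂.tensorUnit ⟶ mon₂.tensorUnit
  /-- `τ : I → J` -/
  τ : mon₁.tensorUnit ⟶ mon₂.tensorUnit
  -- `(J, μ, τ)` is a monoid in `(D, ∘, I)`
  μJ_assoc : (mon₁.associator mon₂.tensorUnit mon₂.tensorUnit mon₂.tensorUnit).hom ≫
      mon₁.whiskerLeft mon₂.tensorUnit μJ ≫ μJ = mon₁.whiskerRight μJ mon₂.tensorUnit ≫ μJ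
  μJ_unit_left : mon₁.whiskerRight τ mon₂.tensorUnit ≫ μJ =
    (mon₁.leftUnitor mon₂.tensorUnit).hom
  μJ_unit_right : mon₁.whiskerLeft mon₂.tensorUnit τ ≫ μJ =
    (mon₁.rightUnitor mon₂.tensorUnit).hom
  -- `(I, Δ, τ)` is a comonoid in `(D, ∗, J)`
  ΔI_coassoc : ΔI ≫ mon₂.whiskerRight ΔI mon₁.tensorUnit ≫
      (mon₂.associator mon₁.tensorUnit mon₁.tensorUnit mon₁.tensorUnit).hom =
    ΔI ≫ mon₂.whiskerLeft mon₁.tensorUnit ΔI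
  ΔI_counit_left : ΔI ≫ mon₂.whiskerRight τ mon₁.tensorUnit ≫
    (mon₂.leftUnitor mon₁.tensorUnit).hom = 𝟙 mon₁.tensorUnit
  ΔI_counit_right : ΔI ≫ mon₂.whiskerLeft mon₁.tensorUnit τ ≫
    (mon₂.rightUnitor mon₁.tensorUnit).hom = 𝟙 mon₁.tensorUnit
  -- associativity of the interchange law with respect to `∘`
  ζ_assoc₁ : ∀ W X Y Z U V : D,
    mon₁.whiskerRight (ζ W X Y Z) (mon₂.tensorObj U V) ≫
        ζ (mon₁.tensorObj W Y) (mon₁.tensorObj X Z) U V ≫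
        mon₂.tensorHom (mon₁.associator W Y U).hom (mon₁.associator X Z V).hom =
      (mon₁.associator (mon₂.tensorObj W X) (mon₂.tensorObj Y Z) (mon₂.tensorObj U V)).hom ≫
        mon₁.whiskerLeft (mon₂.tensorObj W X) (ζ Y Z U V) ≫
        ζ W X (mon₁.tensorObj Y U) (mon₁.tensorObj Z V)
  -- associativity of the interchange law with respect to `∗`
  ζ_assoc₂ : ∀ W X U Y Z V : D,
    ζ (mon₂.tensorObj W X) U (mon₂.tensorObj Y Z) V ≫
        mon₂.tensorHom (ζ W X Y Z) (𝟙 (mon₁.tensorObj U V)) ≫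
        (mon₂.associator (mon₁.tensorObj W Y) (mon₁.tensorObj X Z) (mon₁.tensorObj U V)).hom =
      mon₁.tensorHom (mon₂.associator W X U).hom (mon₂.associator Y Z V).hom ≫
        ζ W (mon₂.tensorObj X U) Y (mon₂.tensorObj Z V) ≫
        mon₂.whiskerLeft (mon₁.tensorObj W Y) (ζ X U Z V)
  -- unitality of the interchange law
  ζ_unit₁ : ∀ Y Z : D,
    mon₁.whiskerRight ΔI (mon₂.tensorObj Y Z) ≫ ζ mon₁.tensorUnit mon₁.tensorUnit Y Z =
      (mon₁.leftUnitor (mon₂.tensorObj Y Z)).hom ≫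
        mon₂.tensorHom (mon₁.leftUnitor Y).inv (mon₁.leftUnitor Z).inv
  ζ_unit₂ : ∀ Y Z : D,
    mon₁.whiskerLeft (mon₂.tensorObj Y Z) ΔI ≫ ζ Y Z mon₁.tensorUnit mon₁.tensorUnit =
      (mon₁.rightUnitor (mon₂.tensorObj Y Z)).hom ≫
        mon₂.tensorHom (mon₁.rightUnitor Y).inv (mon₁.rightUnitor Z).inv
  ζ_unit₃ : ∀ W Y : D,
    mon₁.tensorHom (mon₂.rightUnitor W).inv (mon₂.rightUnitor Y).inv ≫
        ζ W mon₂.tensorUnit Y mon₂.tensorUnit ≫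
        mon₂.whiskerLeft (mon₁.tensorObj W Y) μJ =
      (mon₂.rightUnitor (mon₁.tensorObj W Y)).inv
  ζ_unit₄ : ∀ W Y : D,
    mon₁.tensorHom (mon₂.leftUnitor W).inv (mon₂.leftUnitor Y).inv ≫
        ζ mon₂.tensorUnit W mon₂.tensorUnit Y ≫
        mon₂.whiskerRight μJ (mon₁.tensorObj W Y) =
      (mon₂.leftUnitor (mon₁.tensorObj W Y)).inv

variable {D : Type u} [Category.{v} D]

/-- A bimonoid in a duoidal category: a monoid `(A, m, e)` in `(D, ∘, I)` and a comonoid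
`(A, δ, ε)` in `(D, ∗, J)`, subject to the four compatibility conditions. -/
structure Bimonoid (Dd : Duoidal D) where
  A : D
  m : Dd.mon₁.tensorObj A A ⟶ A
  e : Dd.mon₁.tensorUnit ⟶ A
  δ : A ⟶ Dd.mon₂.tensorObj A A
  ε : A ⟶ Dd.mon₂.tensorUnit
  m_assoc : (Dd.mon₁.associator A A A).hom ≫ Dd.mon₁.whiskerLeft A m ≫ m =
    Dd.mon₁.whiskerRight m A ≫ m
  m_unit_left : Dd.mon₁.whiskerRight e A ≫ m = (Dd.mon₁.leftUnitor A).hom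
  m_unit_right : Dd.mon₁.whiskerLeft A e ≫ m = (Dd.mon₁.rightUnitor A).hom
  δ_coassoc : δ ≫ Dd.mon₂.whiskerRight δ A ≫ (Dd.mon₂.associator A A A).hom =
    δ ≫ Dd.mon₂.whiskerLeft A δ
  δ_counit_left : δ ≫ Dd.mon₂.whiskerRight ε A ≫ (Dd.mon₂.leftUnitor A).hom = 𝟙 A
  δ_counit_right : δ ≫ Dd.mon₂.whiskerLeft A ε ≫ (Dd.mon₂.rightUnitor A).hom = 𝟙 A
  compat₁ : m ≫ δ = Dd.mon₁.tensorHom δ δ ≫ Dd.ζ A A A A ≫ Dd.mon₂.tensorHom m m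
  compat₂ : m ≫ ε = Dd.mon₁.tensorHom ε ε ≫ Dd.μJ
  compat₃ : e ≫ δ = Dd.ΔI ≫ Dd.mon₂.tensorHom e e
  compat₄ : e ≫ ε = Dd.τ

variable {Dd : Duoidal D} (B : Bimonoid Dd)

/-- `X ∘ A`, the underlying functor (on objects) of the monad `− ∘ A`. -/
def Tob (X : D) : D := Dd.mon₁.tensorObj X B.A

/-- `f ∘ A`, the action of the monad `− ∘ A` on morphisms. -/
def Tmap {X Y : D} (f : X ⟶ Y) : Tob B X ⟶ Tob B Y := Dd.mon₁.whiskerRight f B.A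

/-- the unit `X ≅ X ∘ I → X ∘ A` of the monad `− ∘ A` -/
def ηT (X : D) : X ⟶ Tob B X :=
  (Dd.mon₁.rightUnitor X).inv ≫ Dd.mon₁.whiskerLeft X B.e

/-- the multiplication `(X ∘ A) ∘ A → X ∘ (A ∘ A) → X ∘ A` of the monad `− ∘ A` -/
def μT (X : D) : Tob B (Tob B X) ⟶ Tob B X :=
  (Dd.mon₁.associator X B.A B.A).hom ≫ Dd.mon₁.whiskerLeft X B.m

/-- `X ∗ A`, the underlying functor (on objects) of the comonad `− ∗ A`. -/
def Gob (X : D) : D := Dd.mon₂.tensorObj X B.A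

/-- `f ∗ A`, the action of the comonad `− ∗ A` on morphisms. -/
def Gmap {X Y : D} (f : X ⟶ Y) : Gob B X ⟶ Gob B Y := Dd.mon₂.whiskerRight f B.A

/-- the comultiplication `X ∗ A → X ∗ (A ∗ A) → (X ∗ A) ∗ A` of the comonad `− ∗ A` -/
def δG (X : D) : Gob B X ⟶ Gob B (Gob B X) :=
  Dd.mon₂.whiskerLeft X B.δ ≫ (Dd.mon₂.associator X B.A B.A).inv

/-- the counit `X ∗ A → X ∗ J → X` of the comonad `− ∗ A` -/
def εG (X : D) : Gob B X ⟶ X :=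
  Dd.mon₂.whiskerLeft X B.ε ≫ (Dd.mon₂.rightUnitor X).hom

/-- the entwining `λ_X : (X ∗ A) ∘ A → (X ∗ A) ∘ (A ∗ A) → (X ∘ A) ∗ (A ∘ A) → (X ∘ A) ∗ A` -/
def lam (X : D) : Tob B (Gob B X) ⟶ Gob B (Tob B X) :=
  Dd.mon₁.whiskerLeft (Dd.mon₂.tensorObj X B.A) B.δ ≫ Dd.ζ X B.A B.A B.A ≫
    Dd.mon₂.whiskerLeft (Dd.mon₁.tensorObj X B.A) B.m


section Helpers

variable (M : MonoidalCategory D)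

private lemma tdef {X₁ Y₁ X₂ Y₂ : D} (f : X₁ ⟶ Y₁) (g : X₂ ⟶ Y₂) :
    M.tensorHom f g = M.whiskerRight f X₂ ≫ M.whiskerLeft Y₁ g := by
  letI := M; exact MonoidalCategory.tensorHom_def f g

private lemma tdef' {X₁ Y₁ X₂ Y₂ : D} (f : X₁ ⟶ Y₁) (g : X₂ ⟶ Y₂) :
    M.tensorHom f g = M.whiskerLeft X₁ g ≫ M.whiskerRight f Y₂ := by
  letI := M; exact MonoidalCategory.tensorHom_def' f g

private lemma tcomp {X₁ Y₁ Z₁ X₂ Y₂ Z₂ : D} (f₁ : X₁ ⟶ Y₁) (g₁ : Y₁ ⟶ Z₁)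
    (f₂ : X₂ ⟶ Y₂) (g₂ : Y₂ ⟶ Z₂) :
    M.tensorHom (f₁ ≫ g₁) (f₂ ≫ g₂) = M.tensorHom f₁ f₂ ≫ M.tensorHom g₁ g₂ := by
  letI := M; exact (MonoidalCategory.tensorHom_comp_tensorHom f₁ f₂ g₁ g₂).symm

private lemma tid (X Y : D) : M.tensorHom (𝟙 X) (𝟙 Y) = 𝟙 (M.tensorObj X Y) := by
  letI := M; exact MonoidalCategory.id_tensorHom_id X Y

private lemma twl (X : D) {Y Z : D} (g : Y ⟶ Z) :
    M.tensorHom (𝟙 X) g = M.whiskerLeft X g := by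
  letI := M; exact MonoidalCategory.id_tensorHom X g

private lemma twr {X Y : D} (f : X ⟶ Y) (Z : D) :
    M.tensorHom f (𝟙 Z) = M.whiskerRight f Z := by
  letI := M; exact MonoidalCategory.tensorHom_id f Z

private lemma wlc (X : D) {Y Z W : D} (f : Y ⟶ Z) (g : Z ⟶ W) :
    M.whiskerLeft X (f ≫ g) = M.whiskerLeft X f ≫ M.whiskerLeft X g := by
  letI := M; exact MonoidalCategory.whiskerLeft_comp X f g

private lemma wrc {Y Z W : D} (f : Y ⟶ Z) (g : Z ⟶ W) (X : D) :
    M.whiskerRight (f ≫ g) X = M.whiskerRight f X ≫ M.whiskerRight g X := by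
  letI := M; exact MonoidalCategory.comp_whiskerRight f g X

private lemma wex {W X Y Z : D} (f : W ⟶ X) (g : Y ⟶ Z) :
    M.whiskerLeft W g ≫ M.whiskerRight f Z = M.whiskerRight f Y ≫ M.whiskerLeft X g := by
  letI := M; exact MonoidalCategory.whisker_exchange f g

private lemma anat {X₁ X₂ X₃ Y₁ Y₂ Y₃ : D} (f₁ : X₁ ⟶ Y₁) (f₂ : X₂ ⟶ Y₂) (f₃ : X₃ ⟶ Y₃) :
    M.tensorHom (M.tensorHom f₁ f₂) f₃ ≫ (M.associator Y₁ Y₂ Y₃).hom =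
      (M.associator X₁ X₂ X₃).hom ≫ M.tensorHom f₁ (M.tensorHom f₂ f₃) := by
  letI := M; exact MonoidalCategory.associator_naturality f₁ f₂ f₃

end Helpers


private lemma law_unit (X : D) : ηT B (Gob B X) ≫ lam B X = Gmap B (ηT B X) := by
  unfold ηT Gob lam Gmap Tob Gob
  have h1 : Dd.mon₁.whiskerLeft (Dd.mon₂.tensorObj X B.A) (Dd.mon₂.tensorHom B.e B.e) ≫
      Dd.ζ X B.A B.A B.A
      = Dd.ζ X B.A Dd.mon₁.tensorUnit Dd.mon₁.tensorUnit ≫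
        Dd.mon₂.tensorHom (Dd.mon₁.whiskerLeft X B.e) (Dd.mon₁.whiskerLeft B.A B.e) := by
    have h := Dd.ζ_natural (𝟙 X) (𝟙 B.A) B.e B.e
    simp only [tid] at h
    simp only [twl] at h
    exact h
  simp only [Category.assoc]
  slice_lhs 2 3 => rw [← wlc Dd.mon₁, B.compat₃, wlc Dd.mon₁]
  simp only [Category.assoc]
  slice_lhs 3 4 => rw [h1]
  slice_lhs 2 3 => rw [Dd.ζ_unit₂ X B.A]
  simp only [Category.assoc]
  slice_lhs 1 2 => rw [Iso.inv_hom_id]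
  rw [Category.id_comp, ← twl Dd.mon₂ (Dd.mon₁.tensorObj X B.A) B.m,
    ← tcomp, ← tcomp]
  rw [Category.comp_id]
  simp only [Category.assoc]
  rw [B.m_unit_right, Iso.inv_hom_id, twr]

private lemma law_counit (X : D) : lam B X ≫ εG B (Tob B X) = Tmap B (εG B X) := by
  unfold εG lam Tmap Tob Gob
  have h2 : Dd.ζ X B.A B.A B.A ≫
      Dd.mon₂.whiskerLeft (Dd.mon₁.tensorObj X B.A) (Dd.mon₁.tensorHom B.ε B.ε)
      = Dd.mon₁.tensorHom (Dd.mon₂.whiskerLeft X B.ε) (Dd.mon₂.whiskerLeft B.A B.ε) ≫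
        Dd.ζ X Dd.mon₂.tensorUnit B.A Dd.mon₂.tensorUnit := by
    have h := Dd.ζ_natural (𝟙 X) B.ε (𝟙 B.A) B.ε
    simp only [tid] at h
    simp only [twl] at h
    exact h.symm
  have hcancel : Dd.mon₁.tensorHom (Dd.mon₂.rightUnitor X).hom (Dd.mon₂.rightUnitor B.A).hom ≫
      Dd.mon₁.tensorHom (Dd.mon₂.rightUnitor X).inv (Dd.mon₂.rightUnitor B.A).inv = 𝟙 _ := by
    rw [← tcomp, Iso.hom_inv_id, Iso.hom_inv_id, tid]
  have h3 : Dd.ζ X Dd.mon₂.tensorUnit B.A Dd.mon₂.tensorUnit ≫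
      Dd.mon₂.whiskerLeft (Dd.mon₁.tensorObj X B.A) Dd.μJ
      = Dd.mon₁.tensorHom (Dd.mon₂.rightUnitor X).hom (Dd.mon₂.rightUnitor B.A).hom ≫
        (Dd.mon₂.rightUnitor (Dd.mon₁.tensorObj X B.A)).inv := by
    calc Dd.ζ X Dd.mon₂.tensorUnit B.A Dd.mon₂.tensorUnit ≫
        Dd.mon₂.whiskerLeft (Dd.mon₁.tensorObj X B.A) Dd.μJ
        = (Dd.mon₁.tensorHom (Dd.mon₂.rightUnitor X).hom (Dd.mon₂.rightUnitor B.A).hom ≫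
            Dd.mon₁.tensorHom (Dd.mon₂.rightUnitor X).inv (Dd.mon₂.rightUnitor B.A).inv) ≫
            Dd.ζ X Dd.mon₂.tensorUnit B.A Dd.mon₂.tensorUnit ≫
            Dd.mon₂.whiskerLeft (Dd.mon₁.tensorObj X B.A) Dd.μJ := by
          rw [hcancel, Category.id_comp]
      _ = _ := by rw [Category.assoc, Dd.ζ_unit₃ X B.A]
  simp only [Category.assoc]
  slice_lhs 3 4 => rw [← wlc Dd.mon₂, B.compat₂, wlc Dd.mon₂]
  simp only [Category.assoc]
  slice_lhs 2 3 => rw [h2]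
  simp only [Category.assoc]
  slice_lhs 3 4 => rw [h3]
  simp only [Category.assoc]
  rw [Iso.inv_hom_id, Category.comp_id]
  rw [← twl Dd.mon₁ (Dd.mon₂.tensorObj X B.A) B.δ, ← tcomp, ← tcomp,
    Category.id_comp, B.δ_counit_right, twr]

private lemma law_nat {X Y : D} (f : X ⟶ Y) :
    Tmap B (Gmap B f) ≫ lam B Y = lam B X ≫ Gmap B (Tmap B f) := by
  unfold Tmap Gmap lam Tob Gob
  have h1 : Dd.mon₁.whiskerRight (Dd.mon₂.whiskerRight f B.A) (Dd.mon₂.tensorObj B.A B.A) ≫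
      Dd.ζ Y B.A B.A B.A = Dd.ζ X B.A B.A B.A ≫
      Dd.mon₂.whiskerRight (Dd.mon₁.whiskerRight f B.A) (Dd.mon₁.tensorObj B.A B.A) := by
    have h := Dd.ζ_natural f (𝟙 B.A) (𝟙 B.A) (𝟙 B.A)
    simp only [tid] at h
    simp only [twr] at h
    exact h
  simp only [Category.assoc]
  slice_lhs 1 2 => rw [← wex Dd.mon₁]
  simp only [Category.assoc]
  slice_lhs 2 3 => rw [h1]
  simp only [Category.assoc]
  slice_lhs 3 4 => rw [← wex Dd.mon₂]

private lemma law_mul (X : D) : μT B (Gob B X) ≫ lam B X =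
    Tmap B (lam B X) ≫ lam B (Tob B X) ≫ Gmap B (μT B X) := by
  unfold μT lam Tmap Gmap Tob Gob
  have h2 : Dd.mon₁.whiskerLeft (Dd.mon₂.tensorObj X B.A) (Dd.mon₂.tensorHom B.m B.m) ≫
      Dd.ζ X B.A B.A B.A
      = Dd.ζ X B.A (Dd.mon₁.tensorObj B.A B.A) (Dd.mon₁.tensorObj B.A B.A) ≫
        Dd.mon₂.tensorHom (Dd.mon₁.whiskerLeft X B.m) (Dd.mon₁.whiskerLeft B.A B.m) := by
    have h := Dd.ζ_natural (𝟙 X) (𝟙 B.A) B.m B.m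
    simp only [tid] at h; simp only [twl] at h; exact h
  have h3 : Dd.mon₁.whiskerRight (Dd.mon₂.whiskerLeft (Dd.mon₁.tensorObj X B.A) B.m)
        (Dd.mon₂.tensorObj B.A B.A) ≫ Dd.ζ (Dd.mon₁.tensorObj X B.A) B.A B.A B.A
      = Dd.ζ (Dd.mon₁.tensorObj X B.A) (Dd.mon₁.tensorObj B.A B.A) B.A B.A ≫
        Dd.mon₂.whiskerLeft (Dd.mon₁.tensorObj (Dd.mon₁.tensorObj X B.A) B.A)
          (Dd.mon₁.whiskerRight B.m B.A) := by
    have h := Dd.ζ_natural (𝟙 (Dd.mon₁.tensorObj X B.A)) B.m (𝟙 B.A) (𝟙 B.A)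
    simp only [tid] at h; simp only [twl, twr] at h; exact h
  have h4 : (Dd.mon₁.associator (Dd.mon₂.tensorObj X B.A) B.A B.A).hom ≫
      Dd.mon₁.whiskerLeft (Dd.mon₂.tensorObj X B.A) (Dd.mon₁.tensorHom B.δ B.δ)
      = Dd.mon₁.tensorHom (Dd.mon₁.whiskerLeft (Dd.mon₂.tensorObj X B.A) B.δ) B.δ ≫
        (Dd.mon₁.associator (Dd.mon₂.tensorObj X B.A) (Dd.mon₂.tensorObj B.A B.A)
          (Dd.mon₂.tensorObj B.A B.A)).hom := by
    have h := anat Dd.mon₁ (𝟙 (Dd.mon₂.tensorObj X B.A)) B.δ B.δ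
    simp only [twl] at h; exact h.symm
  have h5 := (Dd.ζ_assoc₁ X B.A B.A B.A B.A B.A).symm
  simp only [Category.assoc]
  slice_lhs 2 3 => rw [← wlc Dd.mon₁, B.compat₁, wlc Dd.mon₁, wlc Dd.mon₁]
  simp only [Category.assoc]
  slice_lhs 4 5 => rw [h2]
  simp only [Category.assoc]
  slice_lhs 1 2 => rw [h4]
  simp only [Category.assoc]
  slice_lhs 2 4 => rw [h5]
  simp only [Category.assoc]
  slice_lhs 4 5 => rw [← tcomp]
  slice_lhs 4 5 =>
    rw [← twl Dd.mon₂ (Dd.mon₁.tensorObj X B.A) B.m, ← tcomp]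
  simp only [Category.comp_id, Category.assoc]
  rw [B.m_assoc]
  -- factor the second component
  have h6 : Dd.mon₂.tensorHom
        ((Dd.mon₁.associator X B.A B.A).hom ≫ Dd.mon₁.whiskerLeft X B.m)
        (Dd.mon₁.whiskerRight B.m B.A ≫ B.m)
      = Dd.mon₂.whiskerLeft (Dd.mon₁.tensorObj (Dd.mon₁.tensorObj X B.A) B.A)
          (Dd.mon₁.whiskerRight B.m B.A) ≫
        Dd.mon₂.tensorHom ((Dd.mon₁.associator X B.A B.A).hom ≫ Dd.mon₁.whiskerLeft X B.m)
          B.m := by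
    rw [← twl Dd.mon₂, ← tcomp, Category.id_comp]
  rw [h6]
  slice_lhs 3 4 => rw [← h3]
  simp only [Category.assoc]
  slice_lhs 2 3 => rw [← wrc Dd.mon₁]
  -- now fold the front into a tensorHom
  have h7 : Dd.mon₁.tensorHom (Dd.mon₁.whiskerLeft (Dd.mon₂.tensorObj X B.A) B.δ) B.δ ≫
      Dd.mon₁.whiskerRight (Dd.ζ X B.A B.A B.A ≫
        Dd.mon₂.whiskerLeft (Dd.mon₁.tensorObj X B.A) B.m) (Dd.mon₂.tensorObj B.A B.A)
      = Dd.mon₁.tensorHom (Dd.mon₁.whiskerLeft (Dd.mon₂.tensorObj X B.A) B.δ ≫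
          Dd.ζ X B.A B.A B.A ≫ Dd.mon₂.whiskerLeft (Dd.mon₁.tensorObj X B.A) B.m) B.δ := by
    rw [← twr Dd.mon₁, ← tcomp, Category.comp_id]
  slice_lhs 1 2 => rw [h7]
  rw [tdef Dd.mon₁ (Dd.mon₁.whiskerLeft (Dd.mon₂.tensorObj X B.A) B.δ ≫
      Dd.ζ X B.A B.A B.A ≫ Dd.mon₂.whiskerLeft (Dd.mon₁.tensorObj X B.A) B.m) B.δ,
    tdef' Dd.mon₂ ((Dd.mon₁.associator X B.A B.A).hom ≫ Dd.mon₁.whiskerLeft X B.m) B.m]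
  simp only [Category.assoc]

private lemma law_comul (X : D) : lam B X ≫ δG B (Tob B X) =
    Tmap B (δG B X) ≫ lam B (Gob B X) ≫ Gmap B (lam B X) := by
  unfold δG lam Tmap Gmap Tob Gob
  have h2 : Dd.ζ X B.A B.A B.A ≫
      Dd.mon₂.whiskerLeft (Dd.mon₁.tensorObj X B.A) (Dd.mon₁.tensorHom B.δ B.δ)
      = Dd.mon₁.tensorHom (Dd.mon₂.whiskerLeft X B.δ) (Dd.mon₂.whiskerLeft B.A B.δ) ≫
        Dd.ζ X (Dd.mon₂.tensorObj B.A B.A) B.A (Dd.mon₂.tensorObj B.A B.A) := by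
    have h := Dd.ζ_natural (𝟙 X) B.δ (𝟙 B.A) B.δ
    simp only [tid] at h; simp only [twl] at h; exact h.symm
  have h8 := (Dd.ζ_assoc₂ X B.A B.A B.A B.A B.A).symm
  have h9 : (Dd.mon₂.associator (Dd.mon₁.tensorObj X B.A) (Dd.mon₁.tensorObj B.A B.A)
        (Dd.mon₁.tensorObj B.A B.A)).hom ≫
      Dd.mon₂.whiskerLeft (Dd.mon₁.tensorObj X B.A) (Dd.mon₂.tensorHom B.m B.m)
      = Dd.mon₂.tensorHom (Dd.mon₂.whiskerLeft (Dd.mon₁.tensorObj X B.A) B.m) B.m ≫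
        (Dd.mon₂.associator (Dd.mon₁.tensorObj X B.A) B.A B.A).hom := by
    have h := anat Dd.mon₂ (𝟙 (Dd.mon₁.tensorObj X B.A)) B.m B.m
    simp only [twl] at h; exact h.symm
  have h10 : Dd.ζ (Dd.mon₂.tensorObj X B.A) B.A B.A B.A ≫
      Dd.mon₂.whiskerRight (Dd.mon₁.whiskerLeft (Dd.mon₂.tensorObj X B.A) B.δ)
        (Dd.mon₁.tensorObj B.A B.A)
      = Dd.mon₁.whiskerLeft (Dd.mon₂.tensorObj (Dd.mon₂.tensorObj X B.A) B.A)
          (Dd.mon₂.whiskerRight B.δ B.A) ≫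
        Dd.ζ (Dd.mon₂.tensorObj X B.A) B.A (Dd.mon₂.tensorObj B.A B.A) B.A := by
    have h := Dd.ζ_natural (𝟙 (Dd.mon₂.tensorObj X B.A)) (𝟙 B.A) B.δ (𝟙 B.A)
    simp only [tid] at h; simp only [twl, twr] at h; exact h.symm
  simp only [Category.assoc]
  slice_lhs 3 4 => rw [← wlc Dd.mon₂, B.compat₁, wlc Dd.mon₂, wlc Dd.mon₂]
  simp only [Category.assoc]
  slice_lhs 2 3 => rw [h2]
  simp only [Category.assoc]
  slice_lhs 1 2 =>
    rw [← twl Dd.mon₁ (Dd.mon₂.tensorObj X B.A) B.δ, ← tcomp]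
  simp only [Category.id_comp]
  rw [← B.δ_coassoc]
  have h7 : Dd.mon₁.tensorHom (Dd.mon₂.whiskerLeft X B.δ)
        (B.δ ≫ Dd.mon₂.whiskerRight B.δ B.A ≫ (Dd.mon₂.associator B.A B.A B.A).hom)
      = Dd.mon₁.tensorHom (Dd.mon₂.whiskerLeft X B.δ ≫ (Dd.mon₂.associator X B.A B.A).inv)
          (B.δ ≫ Dd.mon₂.whiskerRight B.δ B.A) ≫
        Dd.mon₁.tensorHom (Dd.mon₂.associator X B.A B.A).hom
          (Dd.mon₂.associator B.A B.A B.A).hom := by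
    rw [← tcomp]
    simp only [Category.assoc, Iso.inv_hom_id, Category.comp_id]
  rw [h7]
  simp only [Category.assoc]
  slice_lhs 2 4 => rw [h8]
  simp only [Category.assoc]
  slice_lhs 4 5 => rw [h9]
  simp only [Category.assoc]
  slice_lhs 5 6 => rw [Iso.hom_inv_id]
  simp only [Category.comp_id, Category.assoc]
  slice_lhs 3 4 => rw [← tcomp]
  simp only [Category.id_comp]
  have h11 : Dd.mon₁.tensorHom
        (Dd.mon₂.whiskerLeft X B.δ ≫ (Dd.mon₂.associator X B.A B.A).inv)
        (B.δ ≫ Dd.mon₂.whiskerRight B.δ B.A)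
      = Dd.mon₁.tensorHom
          (Dd.mon₂.whiskerLeft X B.δ ≫ (Dd.mon₂.associator X B.A B.A).inv) B.δ ≫
        Dd.mon₁.whiskerLeft (Dd.mon₂.tensorObj (Dd.mon₂.tensorObj X B.A) B.A)
          (Dd.mon₂.whiskerRight B.δ B.A) := by
    rw [← twl Dd.mon₁, ← tcomp, Category.comp_id]
  rw [h11]
  simp only [Category.assoc]
  slice_lhs 2 3 => rw [← h10]
  simp only [Category.assoc]
  have h12 : Dd.mon₂.whiskerRight (Dd.mon₁.whiskerLeft (Dd.mon₂.tensorObj X B.A) B.δ)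
        (Dd.mon₁.tensorObj B.A B.A) ≫
      Dd.mon₂.tensorHom (Dd.ζ X B.A B.A B.A ≫
        Dd.mon₂.whiskerLeft (Dd.mon₁.tensorObj X B.A) B.m) B.m
      = Dd.mon₂.tensorHom (Dd.mon₁.whiskerLeft (Dd.mon₂.tensorObj X B.A) B.δ ≫
          Dd.ζ X B.A B.A B.A ≫ Dd.mon₂.whiskerLeft (Dd.mon₁.tensorObj X B.A) B.m) B.m := by
    rw [← twr Dd.mon₂, ← tcomp, Category.id_comp]
  slice_lhs 3 4 => rw [h12]
  rw [tdef Dd.mon₁ (Dd.mon₂.whiskerLeft X B.δ ≫ (Dd.mon₂.associator X B.A B.A).inv) B.δ,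
    tdef' Dd.mon₂ (Dd.mon₁.whiskerLeft (Dd.mon₂.tensorObj X B.A) B.δ ≫
      Dd.ζ X B.A B.A B.A ≫ Dd.mon₂.whiskerLeft (Dd.mon₁.tensorObj X B.A) B.m) B.m]
  simp only [Category.assoc]
/-- Let `(𝒟, ∘, I, ∗, J, ζ)` be a duoidal category and `(A, m, e, δ, ε)` a
bimonoid in `𝒟`.  Then the natural transformation
`λ_X = ((X ∘ A) ∗ m) ∘ ζ_{X,A,A,A} ∘ ((X ∗ A) ∘ δ) : (X ∗ A) ∘ A → (X ∘ A) ∗ A`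
is a mixed distributive law from the monad `− ∘ A` to the comonad `− ∗ A` on `𝒟`. -/
theorem statement14 :
    -- naturality of `λ`
    (∀ {X Y : D} (f : X ⟶ Y),
      Tmap B (Gmap B f) ≫ lam B Y = lam B X ≫ Gmap B (Tmap B f)) ∧
    -- λ ∘ eG = Ge
    (∀ X : D, ηT B (Gob B X) ≫ lam B X = Gmap B (ηT B X)) ∧
    -- λ ∘ mG = Gm ∘ λT ∘ Tλ
    (∀ X : D, μT B (Gob B X) ≫ lam B X =
      Tmap B (lam B X) ≫ lam B (Tob B X) ≫ Gmap B (μT B X)) ∧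
    -- εT ∘ λ = Tε
    (∀ X : D, lam B X ≫ εG B (Tob B X) = Tmap B (εG B X)) ∧
    -- δT ∘ λ = Gλ ∘ λG ∘ Tδ
    (∀ X : D, lam B X ≫ δG B (Tob B X) =
      Tmap B (δG B X) ≫ lam B (Gob B X) ≫ Gmap B (lam B X)) := by
  exact ⟨fun f => law_nat B f, fun X => law_unit B X, fun X => law_mul B X,
    fun X => law_counit B X, fun X => law_comul B X⟩
end

section
/- Let (𝒟, ∘, I, ∗, J) be a duoidal category and A a bimonoid in 𝒟. The assignment sending a right I-comodule (X, θ) (for the comonoid (I, Δ, τ) in (𝒟, ∗, J)) to the triple (X ∘ A, (X ∘ m) ∘ a, ϑ), where ϑ : X ∘ A → (X ∘ A) ∗ A is ζ ∘ ((X ∗ I) ∘ δ) ∘ (θ ∘ A) followed by the unit isomorphism (I ∘ A) ≅ A, defines a functor K from 𝒟^I to the category 𝒟^A_A of right-right A-Hopf modules making the square U^{Ĝ} ∘ K = φ_A ∘ U^I commute, where φ_A is the free right A-module functor and U^I is the forgetful functor from I-comodules. -/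
open CategoryTheory

universe v u

variable {D : Type u} [Category.{v} D]

variable {Dd : Duoidal D} (B : Bimonoid Dd)

/-- A right comodule over the comonoid `(I, Δ, τ)` in `(𝒟, ∗, J)`. -/
structure IComod (Dd : Duoidal D) where
  X : D
  θ : X ⟶ Dd.mon₂.tensorObj X Dd.mon₁.tensorUnit
  counit : θ ≫ Dd.mon₂.whiskerLeft X Dd.τ ≫ (Dd.mon₂.rightUnitor X).hom = 𝟙 X
  coassoc : θ ≫ Dd.mon₂.whiskerLeft X Dd.ΔI ≫
      (Dd.mon₂.associator X Dd.mon₁.tensorUnit Dd.mon₁.tensorUnit).inv =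
    θ ≫ Dd.mon₂.whiskerRight θ Dd.mon₁.tensorUnit

/-- Morphisms of right `I`-comodules. -/
@[ext]
structure IComodHom {Dd : Duoidal D} (M N : IComod Dd) where
  f : M.X ⟶ N.X
  hcom : M.θ ≫ Dd.mon₂.whiskerRight f Dd.mon₁.tensorUnit = f ≫ N.θ

instance {Dd : Duoidal D} : Category (IComod Dd) where
  Hom M N := IComodHom M N
  id M := ⟨𝟙 M.X, by letI := Dd.mon₂; simp⟩
  comp {M N P} f g := ⟨f.f ≫ g.f, by
    letI := Dd.mon₂
    rw [show Dd.mon₂.whiskerRight (f.f ≫ g.f) Dd.mon₁.tensorUnit =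
      Dd.mon₂.whiskerRight f.f Dd.mon₁.tensorUnit ≫
        Dd.mon₂.whiskerRight g.f Dd.mon₁.tensorUnit from
      MonoidalCategory.comp_whiskerRight f.f g.f _]
    rw [← Category.assoc, f.hcom, Category.assoc, g.hcom, ← Category.assoc]⟩
  id_comp f := by apply IComodHom.ext; simp
  comp_id f := by apply IComodHom.ext; simp
  assoc f g h := by apply IComodHom.ext; simp

/-- A right-right `A`-Hopf module `(X, h, ϑ)` in a duoidal category: a right module over
the monoid `(A, m, e)` in `(𝒟, ∘, I)` and a right comodule over the comonoid `(A, δ, ε)`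
in `(𝒟, ∗, J)`, compatible via the entwining `λ`. -/
structure HopfMod {Dd : Duoidal D} (B : Bimonoid Dd) where
  X : D
  h : Tob B X ⟶ X
  θ : X ⟶ Gob B X
  h_unit : ηT B X ≫ h = 𝟙 X
  h_assoc : μT B X ≫ h = Tmap B h ≫ h
  θ_counit : θ ≫ εG B X = 𝟙 X
  θ_coassoc : θ ≫ δG B X = θ ≫ Gmap B θ
  compat : h ≫ θ = Tmap B θ ≫ lam B X ≫ Gmap B h

/-- Morphisms of `A`-Hopf modules. -/
@[ext]
structure HopfModHom {Dd : Duoidal D} {B : Bimonoid Dd} (M N : HopfMod B) where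
  f : M.X ⟶ N.X
  hmod : Tmap B f ≫ N.h = M.h ≫ f
  hcom : M.θ ≫ Gmap B f = f ≫ N.θ

instance {Dd : Duoidal D} {B : Bimonoid Dd} : Category (HopfMod B) where
  Hom M N := HopfModHom M N
  id M := ⟨𝟙 M.X,
    by
      letI := Dd.mon₁
      show Dd.mon₁.whiskerRight (𝟙 M.X) B.A ≫ M.h = M.h ≫ 𝟙 M.X
      rw [MonoidalCategory.id_whiskerRight, Category.comp_id]
      exact Category.id_comp M.h,
    by
      letI := Dd.mon₂
      show M.θ ≫ Dd.mon₂.whiskerRight (𝟙 M.X) B.A = 𝟙 M.X ≫ M.θ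
      rw [MonoidalCategory.id_whiskerRight, Category.id_comp]
      exact Category.comp_id M.θ⟩
  comp {M N P} f g := ⟨f.f ≫ g.f,
    by
      letI := Dd.mon₁
      rw [show Tmap B (f.f ≫ g.f) = Tmap B f.f ≫ Tmap B g.f from
        MonoidalCategory.comp_whiskerRight f.f g.f _]
      rw [Category.assoc, g.hmod, ← Category.assoc, f.hmod, Category.assoc],
    by
      letI := Dd.mon₂
      rw [show Gmap B (f.f ≫ g.f) = Gmap B f.f ≫ Gmap B g.f from
        MonoidalCategory.comp_whiskerRight f.f g.f _]
      rw [← Category.assoc, f.hcom, Category.assoc, g.hcom, ← Category.assoc]⟩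
  id_comp f := by apply HopfModHom.ext; simp
  comp_id f := by apply HopfModHom.ext; simp
  assoc f g h := by apply HopfModHom.ext; simp

/-! ### Auxiliary lemmas for the proof of Statement 16 -/

namespace S16H

variable {D : Type u} [Category.{v} D]

section Helpers

variable (𝕄 : MonoidalCategory D)

theorem wlC (W : D) {X Y Z : D} (f : X ⟶ Y) (g : Y ⟶ Z) :
    𝕄.whiskerLeft W (f ≫ g) = 𝕄.whiskerLeft W f ≫ 𝕄.whiskerLeft W g := by
  letI := 𝕄; exact MonoidalCategory.whiskerLeft_comp W f g

theorem wrC {X Y Z : D} (f : X ⟶ Y) (g : Y ⟶ Z) (W : D) :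
    𝕄.whiskerRight (f ≫ g) W = 𝕄.whiskerRight f W ≫ 𝕄.whiskerRight g W := by
  letI := 𝕄; exact MonoidalCategory.comp_whiskerRight f g W

theorem wlI (W X : D) : 𝕄.whiskerLeft W (𝟙 X) = 𝟙 (𝕄.tensorObj W X) := by
  letI := 𝕄; exact MonoidalCategory.whiskerLeft_id W X

theorem wrI (X W : D) : 𝕄.whiskerRight (𝟙 X) W = 𝟙 (𝕄.tensorObj X W) := by
  letI := 𝕄; exact MonoidalCategory.id_whiskerRight X W

theorem wEx {W X Y Z : D} (f : W ⟶ X) (g : Y ⟶ Z) :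
    𝕄.whiskerLeft W g ≫ 𝕄.whiskerRight f Z = 𝕄.whiskerRight f Y ≫ 𝕄.whiskerLeft X g := by
  letI := 𝕄; exact MonoidalCategory.whisker_exchange f g

theorem tD {X₁ Y₁ X₂ Y₂ : D} (f : X₁ ⟶ Y₁) (g : X₂ ⟶ Y₂) :
    𝕄.tensorHom f g = 𝕄.whiskerRight f X₂ ≫ 𝕄.whiskerLeft Y₁ g := by
  letI := 𝕄; exact MonoidalCategory.tensorHom_def f g

theorem tD' {X₁ Y₁ X₂ Y₂ : D} (f : X₁ ⟶ Y₁) (g : X₂ ⟶ Y₂) :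
    𝕄.tensorHom f g = 𝕄.whiskerLeft X₁ g ≫ 𝕄.whiskerRight f Y₂ := by
  letI := 𝕄; exact MonoidalCategory.tensorHom_def' f g

theorem tI {X₁ X₂ : D} (f : X₁ ⟶ X₂) (Y : D) :
    𝕄.tensorHom f (𝟙 Y) = 𝕄.whiskerRight f Y := by
  letI := 𝕄; exact MonoidalCategory.tensorHom_id f Y

theorem iT (X : D) {Y₁ Y₂ : D} (f : Y₁ ⟶ Y₂) :
    𝕄.tensorHom (𝟙 X) f = 𝕄.whiskerLeft X f := by
  letI := 𝕄; exact MonoidalCategory.id_tensorHom X f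

theorem tII (X Y : D) : 𝕄.tensorHom (𝟙 X) (𝟙 Y) = 𝟙 (𝕄.tensorObj X Y) := by
  letI := 𝕄; exact MonoidalCategory.id_tensorHom_id X Y

theorem tC {X₁ Y₁ Z₁ X₂ Y₂ Z₂ : D} (f₁ : X₁ ⟶ Y₁) (f₂ : X₂ ⟶ Y₂) (g₁ : Y₁ ⟶ Z₁)
    (g₂ : Y₂ ⟶ Z₂) :
    𝕄.tensorHom (f₁ ≫ g₁) (f₂ ≫ g₂) = 𝕄.tensorHom f₁ f₂ ≫ 𝕄.tensorHom g₁ g₂ := by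
  letI := 𝕄; exact (MonoidalCategory.tensorHom_comp_tensorHom f₁ f₂ g₁ g₂).symm

theorem aL {X X' : D} (f : X ⟶ X') (Y Z : D) :
    𝕄.whiskerRight (𝕄.whiskerRight f Y) Z ≫ (𝕄.associator X' Y Z).hom =
      (𝕄.associator X Y Z).hom ≫ 𝕄.whiskerRight f (𝕄.tensorObj Y Z) := by
  letI := 𝕄; exact MonoidalCategory.associator_naturality_left f Y Z

theorem aM (X : D) {Y Y' : D} (f : Y ⟶ Y') (Z : D) :
    𝕄.whiskerRight (𝕄.whiskerLeft X f) Z ≫ (𝕄.associator X Y' Z).hom =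
      (𝕄.associator X Y Z).hom ≫ 𝕄.whiskerLeft X (𝕄.whiskerRight f Z) := by
  letI := 𝕄; exact MonoidalCategory.associator_naturality_middle X f Z

theorem aR (X Y : D) {Z Z' : D} (f : Z ⟶ Z') :
    𝕄.whiskerLeft (𝕄.tensorObj X Y) f ≫ (𝕄.associator X Y Z').hom =
      (𝕄.associator X Y Z).hom ≫ 𝕄.whiskerLeft X (𝕄.whiskerLeft Y f) := by
  letI := 𝕄; exact MonoidalCategory.associator_naturality_right X Y f

theorem aN {X₁ X₂ X₃ Y₁ Y₂ Y₃ : D} (f₁ : X₁ ⟶ Y₁) (f₂ : X₂ ⟶ Y₂) (f₃ : X₃ ⟶ Y₃) :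
    𝕄.tensorHom (𝕄.tensorHom f₁ f₂) f₃ ≫ (𝕄.associator Y₁ Y₂ Y₃).hom =
      (𝕄.associator X₁ X₂ X₃).hom ≫ 𝕄.tensorHom f₁ (𝕄.tensorHom f₂ f₃) := by
  letI := 𝕄; exact MonoidalCategory.associator_naturality f₁ f₂ f₃

theorem aInv {X₁ X₂ X₃ Y₁ Y₂ Y₃ : D} (f₁ : X₁ ⟶ Y₁) (f₂ : X₂ ⟶ Y₂) (f₃ : X₃ ⟶ Y₃) :
    𝕄.tensorHom f₁ (𝕄.tensorHom f₂ f₃) ≫ (𝕄.associator Y₁ Y₂ Y₃).inv =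
      (𝕄.associator X₁ X₂ X₃).inv ≫ 𝕄.tensorHom (𝕄.tensorHom f₁ f₂) f₃ := by
  letI := 𝕄; exact MonoidalCategory.associator_inv_naturality f₁ f₂ f₃

theorem lN {X Y : D} (f : X ⟶ Y) :
    𝕄.whiskerLeft 𝕄.tensorUnit f ≫ (𝕄.leftUnitor Y).hom = (𝕄.leftUnitor X).hom ≫ f := by
  letI := 𝕄; exact MonoidalCategory.leftUnitor_naturality f

theorem rN {X Y : D} (f : X ⟶ Y) :
    𝕄.whiskerRight f 𝕄.tensorUnit ≫ (𝕄.rightUnitor Y).hom =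
      (𝕄.rightUnitor X).hom ≫ f := by
  letI := 𝕄; exact MonoidalCategory.rightUnitor_naturality f

theorem rT (X Y : D) :
    (𝕄.rightUnitor (𝕄.tensorObj X Y)).hom =
      (𝕄.associator X Y 𝕄.tensorUnit).hom ≫ 𝕄.whiskerLeft X (𝕄.rightUnitor Y).hom := by
  letI := 𝕄; exact MonoidalCategory.rightUnitor_tensor_hom X Y

theorem pent (W X Y Z : D) :
    𝕄.whiskerRight (𝕄.associator W X Y).hom Z ≫
        (𝕄.associator W (𝕄.tensorObj X Y) Z).hom ≫
        𝕄.whiskerLeft W (𝕄.associator X Y Z).hom =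
      (𝕄.associator (𝕄.tensorObj W X) Y Z).hom ≫
        (𝕄.associator W X (𝕄.tensorObj Y Z)).hom := by
  letI := 𝕄; exact MonoidalCategory.pentagon W X Y Z

theorem lwR (X Y : D) :
    𝕄.whiskerRight (𝕄.leftUnitor X).hom Y =
      (𝕄.associator 𝕄.tensorUnit X Y).hom ≫ (𝕄.leftUnitor (𝕄.tensorObj X Y)).hom := by
  letI := 𝕄; exact MonoidalCategory.leftUnitor_whiskerRight X Y

end Helpers

section Main

variable {Dd : Duoidal D} (B : Bimonoid Dd)

/-- naturality of `ζ` in the first variable only -/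
theorem zn₁ {W W' : D} (X Y Z : D) (f : W ⟶ W') :
    Dd.mon₁.whiskerRight (Dd.mon₂.whiskerRight f X) (Dd.mon₂.tensorObj Y Z) ≫
      Dd.ζ W' X Y Z =
    Dd.ζ W X Y Z ≫
      Dd.mon₂.whiskerRight (Dd.mon₁.whiskerRight f Y) (Dd.mon₁.tensorObj X Z) := by
  have h := Dd.ζ_natural f (𝟙 X) (𝟙 Y) (𝟙 Z)
  rw [tI Dd.mon₂ f X, tII Dd.mon₂ Y Z, tI Dd.mon₁ _ _, tI Dd.mon₁ f Y,
    tII Dd.mon₁ X Z, tI Dd.mon₂ _ _] at h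
  exact h

/-- naturality of `ζ` in the second variable only -/
theorem zn₂ (W : D) {X X' : D} (Y Z : D) (f : X ⟶ X') :
    Dd.mon₁.whiskerRight (Dd.mon₂.whiskerLeft W f) (Dd.mon₂.tensorObj Y Z) ≫
      Dd.ζ W X' Y Z =
    Dd.ζ W X Y Z ≫
      Dd.mon₂.whiskerLeft (Dd.mon₁.tensorObj W Y) (Dd.mon₁.whiskerRight f Z) := by
  have h := Dd.ζ_natural (𝟙 W) f (𝟙 Y) (𝟙 Z)
  rw [iT Dd.mon₂ W f, tII Dd.mon₂ Y Z, tI Dd.mon₁ _ _, tII Dd.mon₁ W Y,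
    tI Dd.mon₁ f Z, iT Dd.mon₂ _ _] at h
  exact h

/-- naturality of `ζ` in the third variable only -/
theorem zn₃ (W X : D) {Y Y' : D} (Z : D) (f : Y ⟶ Y') :
    Dd.mon₁.whiskerLeft (Dd.mon₂.tensorObj W X) (Dd.mon₂.whiskerRight f Z) ≫
      Dd.ζ W X Y' Z =
    Dd.ζ W X Y Z ≫
      Dd.mon₂.whiskerRight (Dd.mon₁.whiskerLeft W f) (Dd.mon₁.tensorObj X Z) := by
  have h := Dd.ζ_natural (𝟙 W) (𝟙 X) f (𝟙 Z)
  rw [tII Dd.mon₂ W X, tI Dd.mon₂ f Z, iT Dd.mon₁ _ _, iT Dd.mon₁ W f,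
    tII Dd.mon₁ X Z, tI Dd.mon₂ _ _] at h
  exact h

/-- naturality of `ζ` in the fourth variable only -/
theorem zn₄ (W X Y : D) {Z Z' : D} (f : Z ⟶ Z') :
    Dd.mon₁.whiskerLeft (Dd.mon₂.tensorObj W X) (Dd.mon₂.whiskerLeft Y f) ≫
      Dd.ζ W X Y Z' =
    Dd.ζ W X Y Z ≫
      Dd.mon₂.whiskerLeft (Dd.mon₁.tensorObj W Y) (Dd.mon₁.whiskerLeft X f) := by
  have h := Dd.ζ_natural (𝟙 W) (𝟙 X) (𝟙 Y) f
  rw [tII Dd.mon₂ W X, iT Dd.mon₂ Y f, iT Dd.mon₁ _ _, tII Dd.mon₁ W Y,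
    iT Dd.mon₁ X f, iT Dd.mon₂ _ _] at h
  exact h

/-- naturality of `ζ` in the last two variables simultaneously -/
theorem zn₃₄ (W X : D) {Y Y' Z Z' : D} (f : Y ⟶ Y') (g : Z ⟶ Z') :
    Dd.mon₁.whiskerLeft (Dd.mon₂.tensorObj W X) (Dd.mon₂.tensorHom f g) ≫
      Dd.ζ W X Y' Z' =
    Dd.ζ W X Y Z ≫
      Dd.mon₂.tensorHom (Dd.mon₁.whiskerLeft W f) (Dd.mon₁.whiskerLeft X g) := by
  have h := Dd.ζ_natural (𝟙 W) (𝟙 X) f g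
  rw [tII Dd.mon₂ W X, iT Dd.mon₁ _ _, iT Dd.mon₁ W f, iT Dd.mon₁ X g] at h
  exact h

/-- the comodule structure map `ϑ : X ∘ A ⟶ (X ∘ A) ∗ A` of `K(X, θ)` -/
def thetaK (M : IComod Dd) : Tob B M.X ⟶ Gob B (Tob B M.X) :=
  Tmap B M.θ ≫
    Dd.mon₁.whiskerLeft (Dd.mon₂.tensorObj M.X Dd.mon₁.tensorUnit) B.δ ≫
    Dd.ζ M.X Dd.mon₁.tensorUnit B.A B.A ≫
    Dd.mon₂.whiskerLeft (Dd.mon₁.tensorObj M.X B.A) (Dd.mon₁.leftUnitor B.A).hom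

theorem K_h_unit (X : D) : ηT B (Tob B X) ≫ μT B X = 𝟙 (Tob B X) := by
  dsimp only [ηT, μT, Tob]
  slice_lhs 2 3 => rw [aR Dd.mon₁ X B.A B.e]
  slice_lhs 3 4 => rw [← wlC Dd.mon₁, B.m_unit_right]
  rw [← rT Dd.mon₁ X B.A]
  exact Iso.inv_hom_id _

theorem K_h_assoc (X : D) :
    μT B (Tob B X) ≫ μT B X = Tmap B (μT B X) ≫ μT B X := by
  dsimp only [μT, Tob, Tmap]
  -- LHS : α_{X∘A,A,A} ≫ (X∘A)◁m ≫ α_{X,A,A} ≫ X◁m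
  slice_lhs 2 3 => rw [aR Dd.mon₁ X B.A B.m]
  -- now : α_{X∘A,A,A} ≫ α_{X,A,A∘A} ≫ X◁(A◁m) ≫ X◁m
  slice_lhs 3 4 => rw [← wlC Dd.mon₁]
  slice_lhs 1 2 => rw [← pent Dd.mon₁ X B.A B.A B.A]
  slice_lhs 3 4 => rw [← wlC Dd.mon₁, B.m_assoc, wlC Dd.mon₁]
  slice_rhs 1 1 => rw [wrC Dd.mon₁]
  slice_rhs 2 3 => rw [aM Dd.mon₁ X B.m B.A]
  simp only [Category.assoc]

theorem K_θ_counit (M : IComod Dd) :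
    thetaK B M ≫ εG B (Tob B M.X) = 𝟙 (Tob B M.X) := by
  dsimp only [thetaK, εG, Tob, Tmap, Gob]
  have e1 : Dd.mon₁.tensorHom Dd.τ B.ε ≫ Dd.μJ =
      (Dd.mon₁.leftUnitor B.A).hom ≫ B.ε := by
    rw [tD' Dd.mon₁ Dd.τ B.ε, Category.assoc, Dd.μJ_unit_left, lN Dd.mon₁ B.ε]
  have e2 : Dd.ζ M.X Dd.mon₁.tensorUnit B.A B.A ≫
      Dd.mon₂.whiskerLeft (Dd.mon₁.tensorObj M.X B.A) (Dd.mon₁.tensorHom Dd.τ B.ε) =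
      Dd.mon₁.tensorHom (Dd.mon₂.whiskerLeft M.X Dd.τ) (Dd.mon₂.whiskerLeft B.A B.ε) ≫
        Dd.ζ M.X Dd.mon₂.tensorUnit B.A Dd.mon₂.tensorUnit := by
    have h := Dd.ζ_natural (𝟙 M.X) Dd.τ (𝟙 B.A) B.ε
    rw [iT Dd.mon₂ M.X Dd.τ, iT Dd.mon₂ B.A B.ε, tII Dd.mon₁ M.X B.A,
      iT Dd.mon₂ _ _] at h
    exact h.symm
  have hri : Dd.mon₁.tensorHom (Dd.mon₂.rightUnitor M.X).hom
        (Dd.mon₂.rightUnitor B.A).hom ≫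
      Dd.mon₁.tensorHom (Dd.mon₂.rightUnitor M.X).inv (Dd.mon₂.rightUnitor B.A).inv =
      𝟙 _ := by
    rw [← tC Dd.mon₁, Iso.hom_inv_id, Iso.hom_inv_id, tII Dd.mon₁]
  have e3 : Dd.ζ M.X Dd.mon₂.tensorUnit B.A Dd.mon₂.tensorUnit ≫
      Dd.mon₂.whiskerLeft (Dd.mon₁.tensorObj M.X B.A) Dd.μJ =
      Dd.mon₁.tensorHom (Dd.mon₂.rightUnitor M.X).hom (Dd.mon₂.rightUnitor B.A).hom ≫
        (Dd.mon₂.rightUnitor (Dd.mon₁.tensorObj M.X B.A)).inv := by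
    rw [← Dd.ζ_unit₃ M.X B.A]
    simp only [← Category.assoc]
    rw [hri]
    simp
  simp only [Category.assoc]
  slice_lhs 4 5 => rw [← wlC Dd.mon₂, ← e1, wlC Dd.mon₂]
  slice_lhs 3 4 => rw [e2]
  slice_lhs 4 5 => rw [e3]
  slice_lhs 5 6 => rw [Iso.inv_hom_id]
  slice_lhs 3 4 => rw [← tC Dd.mon₁]
  slice_lhs 3 3 => rw [tD' Dd.mon₁]
  slice_lhs 2 3 => rw [← wlC Dd.mon₁, B.δ_counit_right, wlI Dd.mon₁]
  simp only [Category.id_comp, Category.comp_id]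
  rw [← wrC Dd.mon₁, M.counit, wrI Dd.mon₁]

theorem K_θ_coassoc (M : IComod Dd) :
    thetaK B M ≫ δG B (Tob B M.X) = thetaK B M ≫ Gmap B (thetaK B M) := by
  have hz2 : Dd.ζ (Dd.mon₂.tensorObj M.X Dd.mon₁.tensorUnit) Dd.mon₁.tensorUnit
        (Dd.mon₂.tensorObj B.A B.A) B.A ≫
      Dd.mon₂.whiskerRight (Dd.ζ M.X Dd.mon₁.tensorUnit B.A B.A)
        (Dd.mon₁.tensorObj Dd.mon₁.tensorUnit B.A) =
      Dd.mon₁.tensorHom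
          (Dd.mon₂.associator M.X Dd.mon₁.tensorUnit Dd.mon₁.tensorUnit).hom
          (Dd.mon₂.associator B.A B.A B.A).hom ≫
        Dd.ζ M.X (Dd.mon₂.tensorObj Dd.mon₁.tensorUnit Dd.mon₁.tensorUnit) B.A
          (Dd.mon₂.tensorObj B.A B.A) ≫
        Dd.mon₂.whiskerLeft (Dd.mon₁.tensorObj M.X B.A)
          (Dd.ζ Dd.mon₁.tensorUnit Dd.mon₁.tensorUnit B.A B.A) ≫
        (Dd.mon₂.associator (Dd.mon₁.tensorObj M.X B.A)
          (Dd.mon₁.tensorObj Dd.mon₁.tensorUnit B.A)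
          (Dd.mon₁.tensorObj Dd.mon₁.tensorUnit B.A)).inv := by
    have h := Dd.ζ_assoc₂ M.X Dd.mon₁.tensorUnit Dd.mon₁.tensorUnit B.A B.A B.A
    rw [tI Dd.mon₂] at h
    have h' := congrArg
      (fun t => t ≫ (Dd.mon₂.associator (Dd.mon₁.tensorObj M.X B.A)
        (Dd.mon₁.tensorObj Dd.mon₁.tensorUnit B.A)
        (Dd.mon₁.tensorObj Dd.mon₁.tensorUnit B.A)).inv) h
    simpa using h'
  dsimp only [thetaK, δG, Gmap, Tob, Tmap, Gob]
  simp only [Category.assoc, wrC Dd.mon₂]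
  -- LHS to normal form E
  slice_lhs 4 5 => rw [← wlC Dd.mon₂, ← lN Dd.mon₁ B.δ, wlC Dd.mon₂]
  slice_lhs 3 4 => rw [← zn₄ M.X Dd.mon₁.tensorUnit B.A B.δ]
  slice_lhs 2 3 => rw [← wlC Dd.mon₁]
  -- RHS to normal form E
  slice_rhs 4 5 => rw [wEx Dd.mon₂]
  slice_rhs 5 6 => rw [wEx Dd.mon₂]
  slice_rhs 6 7 => rw [wEx Dd.mon₂]
  slice_rhs 3 4 => rw [← zn₁ Dd.mon₁.tensorUnit B.A B.A M.θ]
  slice_rhs 2 3 => rw [wEx Dd.mon₁]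
  slice_rhs 4 5 => rw [← zn₃ (Dd.mon₂.tensorObj M.X Dd.mon₁.tensorUnit)
    Dd.mon₁.tensorUnit B.A B.δ]
  slice_rhs 7 8 => rw [← tD' Dd.mon₂]
  slice_rhs 5 6 => rw [hz2]
  slice_rhs 8 9 => rw [← iT Dd.mon₂ (Dd.mon₁.tensorObj M.X B.A)
      (Dd.mon₁.leftUnitor B.A).hom,
    ← aInv Dd.mon₂ (𝟙 (Dd.mon₁.tensorObj M.X B.A)) (Dd.mon₁.leftUnitor B.A).hom
      (Dd.mon₁.leftUnitor B.A).hom,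
    iT Dd.mon₂]
  slice_rhs 5 5 => rw [tD' Dd.mon₁]
  slice_rhs 3 5 => rw [← wlC Dd.mon₁, ← wlC Dd.mon₁, B.δ_coassoc]
  slice_rhs 3 4 => rw [wEx Dd.mon₁]
  have hco : M.θ ≫ Dd.mon₂.whiskerRight M.θ Dd.mon₁.tensorUnit ≫
      (Dd.mon₂.associator M.X Dd.mon₁.tensorUnit Dd.mon₁.tensorUnit).hom =
      M.θ ≫ Dd.mon₂.whiskerLeft M.X Dd.ΔI := by
    have h' := congrArg (fun t => t ≫
      (Dd.mon₂.associator M.X Dd.mon₁.tensorUnit Dd.mon₁.tensorUnit).hom) M.coassoc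
    simpa using h'.symm
  slice_rhs 1 3 => rw [← wrC Dd.mon₁, ← wrC Dd.mon₁, hco]
  slice_rhs 1 1 => rw [wrC Dd.mon₁]
  slice_rhs 2 3 => rw [← wEx Dd.mon₁]
  slice_rhs 3 4 => rw [zn₂ M.X B.A (Dd.mon₂.tensorObj B.A B.A) Dd.ΔI]
  have hzu : Dd.mon₁.whiskerRight Dd.ΔI (Dd.mon₂.tensorObj B.A B.A) ≫
      Dd.ζ Dd.mon₁.tensorUnit Dd.mon₁.tensorUnit B.A B.A ≫
      Dd.mon₂.tensorHom (Dd.mon₁.leftUnitor B.A).hom (Dd.mon₁.leftUnitor B.A).hom =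
      (Dd.mon₁.leftUnitor (Dd.mon₂.tensorObj B.A B.A)).hom := by
    rw [← Category.assoc, Dd.ζ_unit₁ B.A B.A, Category.assoc, ← tC Dd.mon₂,
      Iso.inv_hom_id, tII Dd.mon₂, Category.comp_id]
  slice_rhs 4 6 => rw [← wlC Dd.mon₂, ← wlC Dd.mon₂, hzu]
  simp only [Category.assoc]

theorem K_compat (M : IComod Dd) :
    μT B M.X ≫ thetaK B M = Tmap B (thetaK B M) ≫ lam B (Tob B M.X) ≫
      Gmap B (μT B M.X) := by
  dsimp only [thetaK, μT, Tmap, Gmap, lam, Tob, Gob]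
  simp only [Category.assoc, wrC Dd.mon₁]
  -- LHS: 1 α₁ ≫ 2 wl X m ≫ 3 wr θ A ≫ 4 wl (X∗I) δ ≫ 5 ζ ≫ 6 wl₂ P λhom
  slice_lhs 2 3 => rw [wEx Dd.mon₁ M.θ B.m]
  slice_lhs 3 4 => rw [← wlC Dd.mon₁, B.compat₁, wlC Dd.mon₁, wlC Dd.mon₁]
  slice_lhs 5 6 => rw [zn₃₄ M.X Dd.mon₁.tensorUnit B.m B.m]
  slice_lhs 6 7 =>
    rw [← iT Dd.mon₂ (Dd.mon₁.tensorObj M.X B.A) (Dd.mon₁.leftUnitor B.A).hom,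
      ← tC Dd.mon₂, Category.comp_id, lN Dd.mon₁ B.m]
  slice_lhs 1 2 => rw [← aL Dd.mon₁ M.θ B.A B.A]
  slice_lhs 2 3 =>
    rw [← iT Dd.mon₁ (Dd.mon₂.tensorObj M.X Dd.mon₁.tensorUnit)
        (Dd.mon₁.tensorHom B.δ B.δ),
      ← aN Dd.mon₁ (𝟙 (Dd.mon₂.tensorObj M.X Dd.mon₁.tensorUnit)) B.δ B.δ,
      iT Dd.mon₁ (Dd.mon₂.tensorObj M.X Dd.mon₁.tensorUnit) B.δ, tD Dd.mon₁]
  slice_lhs 4 6 => rw [← Dd.ζ_assoc₁ M.X Dd.mon₁.tensorUnit B.A B.A B.A B.A]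
  slice_lhs 3 4 => rw [wEx Dd.mon₁]
  slice_lhs 6 7 =>
    rw [← tC Dd.mon₂,
      show (Dd.mon₁.associator Dd.mon₁.tensorUnit B.A B.A).hom ≫
          (Dd.mon₁.leftUnitor (Dd.mon₁.tensorObj B.A B.A)).hom ≫ B.m =
          Dd.mon₁.whiskerRight (Dd.mon₁.leftUnitor B.A).hom B.A ≫ B.m from by
        rw [← Category.assoc, ← lwR Dd.mon₁]]
  -- RHS
  slice_rhs 4 5 => rw [← wEx Dd.mon₁]
  slice_rhs 5 6 => rw [zn₂ (Dd.mon₁.tensorObj M.X B.A) B.A B.A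
    (Dd.mon₁.leftUnitor B.A).hom]
  slice_rhs 6 8 => rw [← tD' Dd.mon₂, ← iT Dd.mon₂, ← tC Dd.mon₂, Category.id_comp]

/-- the object part of `K` -/
def Kobj (M : IComod Dd) : HopfMod B where
  X := Dd.mon₁.tensorObj M.X B.A
  h := μT B M.X
  θ := thetaK B M
  h_unit := K_h_unit B M.X
  h_assoc := K_h_assoc B M.X
  θ_counit := K_θ_counit B M
  θ_coassoc := K_θ_coassoc B M
  compat := K_compat B M

theorem K_hmod {M N : IComod Dd} (f : M ⟶ N) :
    Tmap B (Tmap B f.f) ≫ μT B N.X = μT B M.X ≫ Tmap B f.f := by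
  dsimp only [Tmap, μT, Tob]
  slice_lhs 1 2 => rw [aL Dd.mon₁ f.f B.A B.A]
  slice_lhs 2 3 => rw [← wEx Dd.mon₁ f.f B.m]
  simp

theorem K_hcom {M N : IComod Dd} (f : M ⟶ N) :
    thetaK B M ≫ Gmap B (Tmap B f.f) = Tmap B f.f ≫ thetaK B N := by
  dsimp only [thetaK, Gmap, Tmap, Tob, Gob]
  simp only [Category.assoc]
  slice_lhs 4 5 => rw [wEx Dd.mon₂ (Dd.mon₁.whiskerRight f.f B.A)
    (Dd.mon₁.leftUnitor B.A).hom]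
  slice_lhs 3 4 => rw [← zn₁ Dd.mon₁.tensorUnit B.A B.A f.f]
  slice_lhs 2 3 => rw [wEx Dd.mon₁ (Dd.mon₂.whiskerRight f.f Dd.mon₁.tensorUnit) B.δ]
  slice_lhs 1 2 => rw [← wrC Dd.mon₁, f.hcom, wrC Dd.mon₁]
  simp only [Category.assoc]

/-- the morphism part of `K` -/
def Kmap {M N : IComod Dd} (f : M ⟶ N) : Kobj B M ⟶ Kobj B N :=
  ⟨Tmap B f.f, K_hmod B f, K_hcom B f⟩

/-- the functor `K : 𝒟^I ⥤ 𝒟^A_A` -/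
def Kfun : IComod Dd ⥤ HopfMod B where
  obj := Kobj B
  map := Kmap B
  map_id M := by
    apply HopfModHom.ext
    show Tmap B (𝟙 M.X) = 𝟙 _
    exact wrI Dd.mon₁ M.X B.A
  map_comp {M N P} f g := by
    apply HopfModHom.ext
    show Tmap B (f.f ≫ g.f) = Tmap B f.f ≫ Tmap B g.f
    exact wrC Dd.mon₁ f.f g.f B.A

end Main

end S16H

/-- Let `(𝒟, ∘, I, ∗, J)` be a duoidal category and `A` a bimonoid in `𝒟`.
The assignment sending a right `I`-comodule `(X, θ)` to the triple
`(X ∘ A, (X ∘ m) ∘ a, ϑ)`, with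
`ϑ = ((X ∘ A) ∗ (λ₁)) ∘ ζ ∘ ((X ∗ I) ∘ δ) ∘ (θ ∘ A) : X ∘ A ⟶ (X ∘ A) ∗ A`,
defines a functor `K : 𝒟^I ⥤ 𝒟^A_A` into the category of right-right `A`-Hopf modules,
whose underlying right `A`-module is the free module `φ_A(X)` (this is the commutativity
`U^{Ĝ} ∘ K = φ_A ∘ U^I`). -/
theorem statement16 (B : Bimonoid Dd) :
    ∃ K : IComod Dd ⥤ HopfMod B,
      (∀ M : IComod Dd,
        (K.obj M).X = Dd.mon₁.tensorObj M.X B.A ∧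
        HEq (K.obj M).h
          ((Dd.mon₁.associator M.X B.A B.A).hom ≫ Dd.mon₁.whiskerLeft M.X B.m) ∧
        HEq (K.obj M).θ
          (Tmap B M.θ ≫
            Dd.mon₁.whiskerLeft (Dd.mon₂.tensorObj M.X Dd.mon₁.tensorUnit) B.δ ≫
            Dd.ζ M.X Dd.mon₁.tensorUnit B.A B.A ≫
            Dd.mon₂.whiskerLeft (Dd.mon₁.tensorObj M.X B.A)
              (Dd.mon₁.leftUnitor B.A).hom)) ∧
      (∀ (M N : IComod Dd) (f : M ⟶ N), HEq (K.map f).f (Tmap B f.f)) := by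
  exact ⟨S16H.Kfun B, fun M => ⟨rfl, HEq.rfl, HEq.rfl⟩, fun M N f => HEq.rfl⟩
end

section
/- Let F ⊣ R : 𝒜 → ℬ be an adjunction, G a comonad on 𝒜, and K : ℬ → 𝒜^G a functor with U^G ∘ K = F. Then K is an equivalence of categories if and only if F is comonadic and the canonical comonad morphism t_K : FR ⟶ G is an isomorphism (i.e. F is a G-Galois functor). -/
open CategoryTheory

namespace Statement18Aux

variable {A : Type*} {B : Type*} [Category A] [Category B]

lemma coalg_ext {G : Comonad A} {C D : G.Coalgebra} (h1 : C.A = D.A)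
    (h2 : HEq C.a D.a) : C = D := by
  cases C; cases D; cases h1; cases h2; rfl

lemma coalg_eqToHom_f {G : Comonad A} {C D : G.Coalgebra} (h : C = D) :
    (eqToHom h).f = eqToHom (congrArg Comonad.Coalgebra.A h) := by
  cases h; rfl

lemma hom_eq_of_heq {W X Y Z : A} (f : W ⟶ X) (g : Y ⟶ Z) (h1 : W = Y) (h2 : X = Z)
    (h : HEq f g) : f = eqToHom h1 ≫ g ≫ eqToHom h2.symm := by
  subst h1; subst h2; simpa using eq_of_heq h

/-- The functor on coalgebras induced by a comonad morphism. -/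
@[simps]
def coalgFunctor {T₁ T₂ : Comonad A} (τ : T₁ ⟶ T₂) : T₁.Coalgebra ⥤ T₂.Coalgebra where
  obj X :=
    { A := X.A
      a := X.a ≫ τ.app X.A
      counit := by rw [Category.assoc, τ.app_ε, X.counit]
      coassoc := by
        have n : (T₁ : A ⥤ A).map X.a ≫ τ.app ((T₁ : A ⥤ A).obj X.A) =
            τ.app X.A ≫ (T₂ : A ⥤ A).map X.a := τ.toNatTrans.naturality X.a
        simp only [Category.assoc, Functor.map_comp]
        rw [τ.app_δ, ← Category.assoc X.a (T₁.δ.app X.A), X.coassoc,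
          Category.assoc, ← Category.assoc ((T₁ : A ⥤ A).map X.a), n]
        simp only [Category.assoc] }
  map {X Y} f :=
    { f := f.f
      h := by
        have n : (T₁ : A ⥤ A).map f.f ≫ τ.app Y.A =
            τ.app X.A ≫ (T₂ : A ⥤ A).map f.f := τ.toNatTrans.naturality f.f
        show (X.a ≫ τ.app X.A) ≫ (T₂ : A ⥤ A).map f.f = f.f ≫ Y.a ≫ τ.app Y.A
        rw [Category.assoc, ← n, ← Category.assoc, f.h, Category.assoc] }
  map_id X := by ext; rfl
  map_comp f g := by ext; rfl

lemma coalgFunctor_isEquivalence {T₁ T₂ : Comonad A} (τ : T₁ ⟶ T₂)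
    [h : ∀ X : A, IsIso (τ.app X)] : (coalgFunctor τ).IsEquivalence := by
  refine { faithful := ⟨fun {X Y} f g hfg => ?_⟩,
           full := ⟨fun {X Y} g => ?_⟩,
           essSurj := ⟨fun D => ?_⟩ }
  · ext
    exact congrArg (fun (p : (coalgFunctor τ).obj X ⟶ (coalgFunctor τ).obj Y) => p.f) hfg
  · have n : (T₁ : A ⥤ A).map g.f ≫ τ.app Y.A =
        τ.app X.A ≫ (T₂ : A ⥤ A).map g.f := τ.toNatTrans.naturality g.f
    refine ⟨⟨g.f, ?_⟩, by ext; rfl⟩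
    rw [← cancel_mono (τ.app Y.A), Category.assoc]
    erw [n]
    erw [← Category.assoc]
    exact g.h.trans (Category.assoc _ _ _).symm
  · have n : (T₁ : A ⥤ A).map (D.a ≫ inv (τ.app D.A)) ≫ τ.app ((T₁ : A ⥤ A).obj D.A) =
        τ.app D.A ≫ (T₂ : A ⥤ A).map (D.a ≫ inv (τ.app D.A)) :=
      τ.toNatTrans.naturality _
    refine ⟨⟨D.A, D.a ≫ inv (τ.app D.A), ?_, ?_⟩, ⟨eqToIso (coalg_ext rfl (heq_of_eq ?_))⟩⟩
    · rw [Category.assoc, ← τ.app_ε, IsIso.inv_hom_id_assoc, D.counit]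
    · rw [← cancel_mono (τ.app ((T₁ : A ⥤ A).obj D.A)),
        ← cancel_mono ((T₂ : A ⥤ A).map (τ.app D.A))]
      simp only [Category.assoc]
      rw [← τ.app_δ, IsIso.inv_hom_id_assoc, D.coassoc,
        ← Category.assoc ((T₁ : A ⥤ A).map (D.a ≫ inv (τ.app D.A))), n]
      simp only [Category.assoc, IsIso.inv_hom_id_assoc, ← Functor.map_comp,
        IsIso.inv_hom_id, Category.comp_id]
    · simp [coalgFunctor]

section Main

variable (F : B ⥤ A) (R : A ⥤ B) (adj : F ⊣ R) (G : Comonad A)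
  (κ : F ⟶ F ⋙ (G : A ⥤ A))

/-- The canonical comonad morphism `t_K : FR ⟶ G`. -/
def tHom
    (hcounit : ∀ X : B, κ.app X ≫ G.ε.app (F.obj X) = 𝟙 (F.obj X))
    (hcoassoc : ∀ X : B,
      κ.app X ≫ G.δ.app (F.obj X) = κ.app X ≫ (G : A ⥤ A).map (κ.app X)) :
    adj.toComonad ⟶ G where
  app X := κ.app (R.obj X) ≫ (G : A ⥤ A).map (adj.counit.app X)
  naturality X Y g := by
    show F.map (R.map g) ≫ κ.app (R.obj Y) ≫ (G : A ⥤ A).map (adj.counit.app Y) =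
      (κ.app (R.obj X) ≫ (G : A ⥤ A).map (adj.counit.app X)) ≫ (G : A ⥤ A).map g
    have n : F.map (R.map g) ≫ κ.app (R.obj Y) =
        κ.app (R.obj X) ≫ (G : A ⥤ A).map (F.map (R.map g)) := κ.naturality (R.map g)
    have c : F.map (R.map g) ≫ adj.counit.app Y = adj.counit.app X ≫ g := by
      simpa using adj.counit.naturality g
    rw [← Category.assoc, n, Category.assoc, ← Functor.map_comp, c, Functor.map_comp]
    simp only [Category.assoc]
  app_ε X := by
    show (κ.app (R.obj X) ≫ (G : A ⥤ A).map (adj.counit.app X)) ≫ G.ε.app X = adj.counit.app X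
    have n : (G : A ⥤ A).map (adj.counit.app X) ≫ G.ε.app X =
        G.ε.app (F.obj (R.obj X)) ≫ adj.counit.app X := by
      simpa using G.ε.naturality (adj.counit.app X)
    rw [Category.assoc, n, ← Category.assoc, hcounit (R.obj X), Category.id_comp]
  app_δ X := by
    show (κ.app (R.obj X) ≫ (G : A ⥤ A).map (adj.counit.app X)) ≫ G.δ.app X =
      F.map (adj.unit.app (R.obj X)) ≫ (κ.app (R.obj (F.obj (R.obj X))) ≫
        (G : A ⥤ A).map (adj.counit.app (F.obj (R.obj X)))) ≫
        (G : A ⥤ A).map (κ.app (R.obj X) ≫ (G : A ⥤ A).map (adj.counit.app X))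
    have n : (G : A ⥤ A).map (adj.counit.app X) ≫ G.δ.app X =
        G.δ.app (F.obj (R.obj X)) ≫ (G : A ⥤ A).map ((G : A ⥤ A).map (adj.counit.app X)) := by
      simpa using G.δ.naturality (adj.counit.app X)
    have nκ : F.map (adj.unit.app (R.obj X)) ≫ κ.app (R.obj (F.obj (R.obj X))) =
        κ.app (R.obj X) ≫ (G : A ⥤ A).map (F.map (adj.unit.app (R.obj X))) :=
      κ.naturality (adj.unit.app (R.obj X))
    simp only [Category.assoc]
    rw [n, ← Category.assoc (κ.app (R.obj X)) (G.δ.app _), hcoassoc (R.obj X),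
      Category.assoc, ← Category.assoc (F.map (adj.unit.app (R.obj X))), nκ, Category.assoc,
      ← Functor.map_comp_assoc, adj.left_triangle_components (R.obj X),
      CategoryTheory.Functor.map_id, Category.id_comp]
    simp only [Functor.map_comp, Category.assoc]

variable (hcounit : ∀ X : B, κ.app X ≫ G.ε.app (F.obj X) = 𝟙 (F.obj X))
  (hcoassoc : ∀ X : B,
    κ.app X ≫ G.δ.app (F.obj X) = κ.app X ≫ (G : A ⥤ A).map (κ.app X))

lemma coact_eq (X : B) :
    F.map (adj.unit.app X) ≫ (tHom F R adj G κ hcounit hcoassoc).app (F.obj X) = κ.app X := by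
  show F.map (adj.unit.app X) ≫ κ.app (R.obj (F.obj X)) ≫
    (G : A ⥤ A).map (adj.counit.app (F.obj X)) = κ.app X
  have nκ : F.map (adj.unit.app X) ≫ κ.app (R.obj (F.obj X)) =
      κ.app X ≫ (G : A ⥤ A).map (F.map (adj.unit.app X)) := κ.naturality (adj.unit.app X)
  rw [← Category.assoc, nκ, Category.assoc, ← Functor.map_comp,
    adj.left_triangle_components X, CategoryTheory.Functor.map_id]
  simp

/-- The comparison composed with the induced coalgebra functor. -/
def Kt : B ⥤ G.Coalgebra :=
  Comonad.comparison adj ⋙ coalgFunctor (tHom F R adj G κ hcounit hcoassoc)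

lemma Kt_obj_A (X : B) : ((Kt F R adj G κ hcounit hcoassoc).obj X).A = F.obj X := rfl

lemma Kt_obj_a (X : B) : ((Kt F R adj G κ hcounit hcoassoc).obj X).a = κ.app X := by
  show F.map (adj.unit.app X) ≫ (tHom F R adj G κ hcounit hcoassoc).app (F.obj X) = κ.app X
  exact coact_eq F R adj G κ hcounit hcoassoc X

lemma key (Y : A) :
    κ.app (R.obj Y) ≫ (G : A ⥤ A).map ((tHom F R adj G κ hcounit hcoassoc).app Y) =
      (tHom F R adj G κ hcounit hcoassoc).app Y ≫ G.δ.app Y := by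
  rw [(tHom F R adj G κ hcounit hcoassoc).app_δ Y]
  show _ = F.map (adj.unit.app (R.obj Y)) ≫ (tHom F R adj G κ hcounit hcoassoc).app (F.obj (R.obj Y)) ≫ _
  erw [← Category.assoc, coact_eq F R adj G κ hcounit hcoassoc (R.obj Y)]
  rfl

/-- The canonical coalgebra morphism `K(R Y) ⟶ cofree Y`. -/
def φ (Y : A) : (Kt F R adj G κ hcounit hcoassoc).obj (R.obj Y) ⟶ G.cofree.obj Y where
  f := (tHom F R adj G κ hcounit hcoassoc).app Y
  h := by
    show ((Kt F R adj G κ hcounit hcoassoc).obj (R.obj Y)).a ≫ _ = _ ≫ G.δ.app Y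
    rw [Kt_obj_a]
    exact key F R adj G κ hcounit hcoassoc Y

lemma t_app_isIso (hE : (Kt F R adj G κ hcounit hcoassoc).IsEquivalence) (Y : A) :
    IsIso ((tHom F R adj G κ hcounit hcoassoc).app Y) := by
  haveI := hE
  set Kt' := Kt F R adj G κ hcounit hcoassoc with hKt'
  let E := Kt'.asEquivalence
  have hφ : IsIso (φ F R adj G κ hcounit hcoassoc Y) := by
    rw [isIso_iff_yoneda_map_bijective]
    intro C
    let X₀ := E.inverse.obj C
    let i : Kt'.obj X₀ ≅ C := E.counitIso.app C
    let j : F.obj X₀ ≅ C.A := G.forget.mapIso i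
    let ψ : (C ⟶ Kt'.obj (R.obj Y)) ≃ (C.A ⟶ Y) :=
      (E.symm.toAdjunction.homEquiv C (R.obj Y)).symm.trans
        ((adj.homEquiv X₀ Y).symm.trans (Iso.homFromEquiv j))
    let e3 : (C.A ⟶ Y) ≃ (C ⟶ G.cofree.obj Y) := G.adj.homEquiv C Y
    have hcomp : (fun (g : C ⟶ Kt'.obj (R.obj Y)) => g ≫ φ F R adj G κ hcounit hcoassoc Y) =
        fun g => e3 (ψ g) := by
      funext g
      have hv : (E.symm.toAdjunction.homEquiv C (R.obj Y))
          ((E.symm.toAdjunction.homEquiv C (R.obj Y)).symm g) = g :=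
        Equiv.apply_symm_apply _ _
      set v := (E.symm.toAdjunction.homEquiv C (R.obj Y)).symm g with hvdef
      have hg : g = E.counitIso.inv.app C ≫ Kt'.map v := by
        rw [← hv, Adjunction.homEquiv_unit]
        rfl
      have hgf : g.f = (E.counitIso.inv.app C).f ≫ F.map v := by
        rw [hg]; rfl
      apply Comonad.Coalgebra.Hom.ext
      show g.f ≫ (tHom F R adj G κ hcounit hcoassoc).app Y = (e3 (ψ g)).f
      have he3 : ∀ (u : C.A ⟶ Y), (e3 u).f = C.a ≫ (G : A ⥤ A).map u := by
        intro u
        show (G.adj.homEquiv C Y u).f = _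
        erw [Adjunction.homEquiv_unit]
        simp [Comonad.adj]
        show (C.a ≫ (G : A ⥤ A).map (𝟙 C.A)) ≫ (G : A ⥤ A).map u = _
        rw [CategoryTheory.Functor.map_id, Category.comp_id]
      have hψ : ψ g = j.inv ≫ F.map v ≫ adj.counit.app Y := by
        show (Iso.homFromEquiv j) ((adj.homEquiv X₀ Y).symm v) = _
        rw [Adjunction.homEquiv_counit]
        rfl
      have hj : j.inv = (E.counitIso.inv.app C).f := rfl
      rw [he3, hψ, hj]
      erw [← Category.assoc ((E.counitIso.inv.app C).f), ← hgf]
      have hgh := g.h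
      rw [Kt_obj_a] at hgh
      show g.f ≫ κ.app (R.obj Y) ≫ (G : A ⥤ A).map (adj.counit.app Y) = _
      erw [Functor.map_comp, ← Category.assoc, ← hgh, Category.assoc]
      rfl
    rw [hcomp]
    exact (ψ.trans e3).bijective
  exact inferInstanceAs (IsIso (G.forget.map (φ F R adj G κ hcounit hcoassoc Y)))

end Main

end Statement18Aux

open Statement18Aux in
/-- Let `F ⊣ R : 𝒜 → ℬ` be an adjunction (with `F : ℬ ⥤ 𝒜` the left
adjoint), `G` a comonad on `𝒜`, and `K : ℬ ⥤ 𝒜^G` a functor with `U^G ∘ K = F` (so `F`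
carries the left `G`-comodule structure `κ` given by the coactions of the coalgebras
`K(X)`).  Then `K` is an equivalence of categories if and only if `F` is comonadic and
the canonical comonad morphism `t_K = (Gσ) ∘ (κR) : FR ⟶ G` is an isomorphism (i.e. `F`
is a `G`-Galois functor). -/
theorem statement18 {A : Type*} {B : Type*} [Category A] [Category B]
    (F : B ⥤ A) (R : A ⥤ B) (adj : F ⊣ R) (G : Comonad A)
    (κ : F ⟶ F ⋙ (G : A ⥤ A))
    (hcounit : ∀ X : B, κ.app X ≫ G.ε.app (F.obj X) = 𝟙 (F.obj X))
    (hcoassoc : ∀ X : B,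
      κ.app X ≫ G.δ.app (F.obj X) = κ.app X ≫ (G : A ⥤ A).map (κ.app X))
    (K : B ⥤ G.Coalgebra)
    (hKobjA : ∀ X : B, (K.obj X).A = F.obj X)
    (hKobja : ∀ X : B, HEq (K.obj X).a (κ.app X))
    (hKmap : ∀ {X Y : B} (f : X ⟶ Y), HEq (K.map f).f (F.map f)) :
    K.IsEquivalence ↔
      ((Comonad.comparison adj).IsEquivalence ∧
        ∀ X : A, IsIso (κ.app (R.obj X) ≫ (G : A ⥤ A).map (adj.counit.app X))) := by
  have hobj : ∀ X : B, K.obj X = (Kt F R adj G κ hcounit hcoassoc).obj X := fun X =>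
    coalg_ext (hKobjA X) ((hKobja X).trans
      (heq_of_eq (Kt_obj_a F R adj G κ hcounit hcoassoc X).symm))
  have hK : K = Kt F R adj G κ hcounit hcoassoc := by
    refine CategoryTheory.Functor.ext hobj (fun X Y f => ?_)
    apply Comonad.Coalgebra.Hom.ext
    rw [Comonad.Coalgebra.comp_f, Comonad.Coalgebra.comp_f, coalg_eqToHom_f, coalg_eqToHom_f]
    exact hom_eq_of_heq _ _ (congrArg Comonad.Coalgebra.A (hobj X))
      (congrArg Comonad.Coalgebra.A (hobj Y)) (hKmap f)
  rw [hK]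
  constructor
  · intro hE
    have ht : ∀ Y : A, IsIso ((tHom F R adj G κ hcounit hcoassoc).app Y) :=
      t_app_isIso F R adj G κ hcounit hcoassoc hE
    refine ⟨?_, fun X => ht X⟩
    haveI : ∀ Y : A, IsIso ((tHom F R adj G κ hcounit hcoassoc).app Y) := ht
    haveI := coalgFunctor_isEquivalence (tHom F R adj G κ hcounit hcoassoc)
    haveI : (Comonad.comparison adj ⋙
        coalgFunctor (tHom F R adj G κ hcounit hcoassoc)).IsEquivalence := hE
    exact Functor.isEquivalence_of_comp_right (Comonad.comparison adj)
      (coalgFunctor (tHom F R adj G κ hcounit hcoassoc))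
  · rintro ⟨h1, h2⟩
    haveI := h1
    haveI : ∀ Y : A, IsIso ((tHom F R adj G κ hcounit hcoassoc).app Y) := fun Y => h2 Y
    haveI := coalgFunctor_isEquivalence (tHom F R adj G κ hcounit hcoassoc)
    exact inferInstanceAs ((Comonad.comparison adj ⋙
      coalgFunctor (tHom F R adj G κ hcounit hcoassoc)).IsEquivalence)
end
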